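/- arXiv:2006.02918 — 5 statements merged into one kernel-verified Lean document; each statement's English description precedes it below -/
import Mathlib

section
/- For every nonnegative integer n and δ ∈ {0,1}: ∑_{k=0}^{n} [(4n+2δ−k+1)/(2n+δ+k+1)] · (−n)_k(1/2−δ−n)_k/[(1)_k(−4n−2δ)_k] · (4/3)^k = (3/4)^{2n+δ} · Γ(1/2)Γ(2n+1+δ)/Γ(2n+δ+1/2), where (x)_k denotes the rising factorial. -/
open Finset Nat

private lemma fne (m : ℕ) : (m ! : ℝ) ≠ 0 := by
  exact_mod_cast Nat.factorial_ne_zero m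

private lemma fs1 (a : ℕ) : ((a+1)! : ℝ) = ((a:ℝ)+1) * (a ! : ℝ) := by
  rw [Nat.factorial_succ]; push_cast; ring

private lemma fs2 (a : ℕ) : ((a+2)! : ℝ) = ((a:ℝ)+2) * ((a:ℝ)+1) * (a ! : ℝ) := by
  rw [show a+2 = (a+1)+1 by ring, Nat.factorial_succ, Nat.factorial_succ]; push_cast; ring

private lemma fs3 (a : ℕ) : ((a+3)! : ℝ)
    = ((a:ℝ)+3) * ((a:ℝ)+2) * ((a:ℝ)+1) * (a ! : ℝ) := by
  rw [show a+3 = (a+2)+1 by ring, Nat.factorial_succ]; push_cast [fs2]; ring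

private lemma pochL1 (m : ℕ) : ∀ k, k ≤ m →
    (ascPochhammer ℝ k).eval (-(m:ℝ)) * ((m-k)! : ℝ) = (-1)^k * (m ! : ℝ) := by
  intro k
  induction k with
  | zero => intro _; simp
  | succ k ih =>
    intro hk
    have ih' := ih (by omega)
    obtain ⟨i, rfl⟩ : ∃ i, m = k+1+i := ⟨m-(k+1), by omega⟩
    rw [show k+1+i-(k+1) = i from by omega]
    rw [show k+1+i-k = i+1 from by omega, fs1] at ih'
    rw [ascPochhammer_succ_right, Polynomial.eval_mul, Polynomial.eval_add, Polynomial.eval_X,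
      Polynomial.eval_natCast]
    push_cast at ih' ⊢
    linear_combination (-1:ℝ) * ih'

private lemma pochHalf (m : ℕ) : ∀ k, k ≤ m →
    (ascPochhammer ℝ k).eval (1/2 - (m:ℝ)) * (4^k * (m ! : ℝ) * ((2*m-2*k)! : ℝ))
      = (-1)^k * ((2*m)! : ℝ) * ((m-k)! : ℝ) := by
  intro k
  induction k with
  | zero => intro _; simp; ring
  | succ k ih =>
    intro hk
    have ih' := ih (by omega)
    obtain ⟨i, rfl⟩ : ∃ i, m = k+1+i := ⟨m-(k+1), by omega⟩
    rw [show 2*(k+1+i)-2*(k+1) = 2*i from by omega]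
    rw [show k+1+i-(k+1) = i from by omega]
    rw [show 2*(k+1+i)-2*k = 2*i+2 from by omega] at ih'
    rw [show k+1+i-k = i+1 from by omega] at ih'
    rw [fs2, fs1] at ih'
    rw [ascPochhammer_succ_right, Polynomial.eval_mul, Polynomial.eval_add, Polynomial.eval_X,
      Polynomial.eval_natCast]
    push_cast at ih' ⊢
    have hpos : ((2*(i:ℝ)+2)*(2*(i:ℝ)+1)) ≠ 0 := by positivity
    apply mul_right_cancel₀ hpos
    linear_combination (-(2*(i:ℝ)+1)*2) * ih'

private noncomputable def ff (N k : ℕ) : ℝ :=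
  if 2*k ≤ N then
    (-1)^k * ((2*N-k+1)! : ℝ) * ((N+k)! : ℝ) /
      (3^k * ((N-2*k)! : ℝ) * ((N+k+1)! : ℝ) * (k ! : ℝ) * (N ! : ℝ))
  else 0

private noncomputable def gg (N k : ℕ) : ℝ :=
  if 2*k ≤ N+1 then
    3*(k:ℝ)*((k:ℝ)-2*(N:ℝ)-2)/(((N:ℝ)+1)*((N:ℝ)+(k:ℝ)+1)) * ((-1)^k/3^k) *
      (((2*N-k+1)! : ℝ) / (((N+1-2*k)! : ℝ) * (k ! : ℝ) * (N ! : ℝ)))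
  else 0

private lemma cert (N k : ℕ) : ff (N+1) k - 3 * ff N k = gg N (k+1) - gg N k := by
  by_cases hA : 2*k+1 ≤ N
  · -- interior case
    obtain ⟨j, rfl⟩ : ∃ j, N = 2*k+j+1 := ⟨N-(2*k+1), by omega⟩
    simp only [ff, gg]
    rw [if_pos (show 2*k ≤ 2*k+j+1+1 from by omega),
        if_pos (show 2*k ≤ 2*k+j+1 from by omega),
        if_pos (show 2*(k+1) ≤ 2*k+j+1+1 from by omega),
        if_pos (show 2*k ≤ 2*k+j+1+1 from by omega)]
    rw [show 2*(2*k+j+1+1)-k+1 = 3*k+2*j+2+3 from by omega,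
        show 2*k+j+1+1+k+1 = 3*k+j+1+2 from by omega,
        show 2*k+j+1+1+k = 3*k+j+1+1 from by omega,
        show 2*k+j+1+1-2*k = j+2 from by omega,
        show 2*(2*k+j+1)-(k+1)+1 = 3*k+2*j+2 from by omega,
        show 2*(2*k+j+1)-k+1 = 3*k+2*j+2+1 from by omega,
        show 2*k+j+1+k+1 = 3*k+j+1+1 from by omega,
        show 2*k+j+1+k = 3*k+j+1 from by omega,
        show 2*k+j+1-2*k = j+1 from by omega,
        show 2*k+j+1+1-2*(k+1) = j from by omega]
    rw [fs3 (3*k+2*j+2), fs1 (3*k+2*j+2), fs2 (j), fs1 (j), fs2 (3*k+j+1), fs1 (3*k+j+1),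
        fs1 (k), fs1 (2*k+j+1)]
    have h1 : ((3:ℝ))^k ≠ 0 := by positivity
    have h2 := fne (3*k+2*j+2)
    have h3 := fne j
    have h4 := fne k
    have h5 := fne (2*k+j+1)
    have h6 := fne (3*k+j+1)
    have h7 : ((2*k+j+1:ℕ):ℝ)+1 ≠ 0 := by positivity
    have h8 : ((2*k+j+1:ℕ):ℝ)+(k:ℝ)+1 ≠ 0 := by positivity
    have h9 : ((2*k+j+1:ℕ):ℝ)+((k+1:ℕ):ℝ)+1 ≠ 0 := by positivity
    push_cast
    push_cast at h7 h8 h9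
    field_simp
    ring
  · by_cases hB : N = 2*k
    · subst hB
      simp only [ff, gg]
      rw [if_pos (show 2*k ≤ 2*k+1 from by omega),
          if_pos (show 2*k ≤ 2*k from le_refl _),
          if_neg (show ¬ 2*(k+1) ≤ 2*k+1 from by omega),
          if_pos (show 2*k ≤ 2*k+1 from by omega)]
      rw [show 2*(2*k+1)-k+1 = 3*k+3 from by omega,
          show 2*k+1+k+1 = 3*k+2 from by omega,
          show 2*k+1+k = 3*k+1 from by omega,
          show 2*k+1-2*k = 1 from by omega,
          show 2*(2*k)-k+1 = 3*k+1 from by omega,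
          show 2*k+k+1 = 3*k+1 from by omega,
          show 2*k+k = 3*k from by omega,
          show 2*k-2*k = 0 from by omega]
      rw [fs3 (3*k), fs2 (3*k), fs1 (3*k), fs1 (2*k), Nat.factorial_one, Nat.factorial_zero]
      have h1 : ((3:ℝ))^k ≠ 0 := by positivity
      have h2 := fne (3*k)
      have h4 := fne k
      have h5 := fne (2*k)
      have h7 : ((2*k:ℕ):ℝ)+1 ≠ 0 := by positivity
      have h8 : ((2*k:ℕ):ℝ)+(k:ℝ)+1 ≠ 0 := by positivity
      push_cast
      push_cast at h7 h8
      field_simp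
      ring
    · by_cases hC : N+1 = 2*k
      · obtain ⟨l, rfl⟩ : ∃ l, k = l+1 := ⟨k-1, by omega⟩
        obtain rfl : N = 2*l+1 := by omega
        simp only [ff, gg]
        rw [if_pos (show 2*(l+1) ≤ 2*l+1+1 from by omega),
            if_neg (show ¬ 2*(l+1) ≤ 2*l+1 from by omega),
            if_neg (show ¬ 2*(l+1+1) ≤ 2*l+1+1 from by omega),
            if_pos (show 2*(l+1) ≤ 2*l+1+1 from by omega)]
        rw [show 2*(2*l+1+1)-(l+1)+1 = 3*l+2+2 from by omega,
            show 2*l+1+1+(l+1)+1 = 3*l+2+2 from by omega,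
            show 2*l+1+1+(l+1) = 3*l+2+1 from by omega,
            show 2*l+1+1-2*(l+1) = 0 from by omega,
            show 2*(2*l+1)-(l+1)+1 = 3*l+2 from by omega]
        rw [fs2 (3*l+2), fs1 (3*l+2), fs1 (2*l+1), Nat.factorial_zero]
        have h1 : ((3:ℝ))^(l+1) ≠ 0 := by positivity
        have h2 := fne (3*l+2)
        have h4 := fne (l+1)
        have h5 := fne (2*l+1)
        have h7 : ((2*l+1:ℕ):ℝ)+1 ≠ 0 := by positivity
        have h8 : ((2*l+1:ℕ):ℝ)+((l+1:ℕ):ℝ)+1 ≠ 0 := by positivity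
        push_cast
        push_cast at h7 h8
        field_simp
        ring
      · simp only [ff, gg]
        rw [if_neg (show ¬ 2*k ≤ N+1 from by omega),
            if_neg (show ¬ 2*k ≤ N from by omega),
            if_neg (show ¬ 2*(k+1) ≤ N+1 from by omega),
            if_neg (show ¬ 2*k ≤ N+1 from by omega)]
        ring

private lemma gg_zero (N : ℕ) : gg N 0 = 0 := by
  simp [gg]

private lemma gg_top (N : ℕ) : gg N (N+2) = 0 := by
  rw [gg, if_neg (by omega)]

private lemma S_eq : ∀ N, ∑ k ∈ Finset.range (N+2), ff N k = 3^N := by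
  intro N
  induction N with
  | zero =>
    rw [Finset.sum_range_succ, Finset.sum_range_succ, Finset.sum_range_zero]
    rw [show ff 0 0 = 1 from by simp [ff], show ff 0 1 = 0 from by rw [ff, if_neg (by omega)]]
    norm_num
  | succ N ih =>
    rw [Finset.sum_range_succ]
    have hlast : ff (N+1) (N+2) = 0 := by rw [ff, if_neg (by omega)]
    have key : ∑ k ∈ Finset.range (N+2), ff (N+1) k
        = ∑ k ∈ Finset.range (N+2), (3 * ff N k + (gg N (k+1) - gg N k)) := by
      refine Finset.sum_congr rfl fun k _ => ?_
      have := cert N k; linarith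
    rw [hlast, key, Finset.sum_add_distrib, Finset.sum_range_sub (gg N), ← Finset.mul_sum, ih,
      gg_zero, gg_top]
    ring

private lemma gammaHalf (m : ℕ) :
    Real.Gamma ((m:ℝ) + 1/2) * (4^m * (m ! : ℝ)) = Real.sqrt Real.pi * ((2*m)! : ℝ) := by
  induction m with
  | zero => norm_num [Real.Gamma_one_half_eq]
  | succ m ih =>
    have hne : ((m:ℝ)+1/2) ≠ 0 := by positivity
    rw [show ((m+1:ℕ):ℝ)+1/2 = ((m:ℝ)+1/2)+1 from by push_cast; ring, Real.Gamma_add_one hne]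
    rw [show 2*(m+1) = 2*m+2 from by ring, fs2 (2*m), fs1 m]
    push_cast
    linear_combination (4*((m:ℝ)+1/2)*((m:ℝ)+1)) * ih

theorem strange_identity_48 (n δ : ℕ) (hδ : δ = 0 ∨ δ = 1) :
    ∑ k ∈ Finset.range (n + 1),
      (((4 * n + 2 * δ : ℝ) - k + 1) / ((2 * n + δ : ℝ) + k + 1)) *
        ((ascPochhammer ℝ k).eval (-(n : ℝ)) *
          (ascPochhammer ℝ k).eval (1 / 2 - (δ : ℝ) - (n : ℝ))) /
        ((ascPochhammer ℝ k).eval 1 *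
          (ascPochhammer ℝ k).eval (-(4 * n : ℝ) - 2 * δ)) * (4 / 3 : ℝ) ^ k
      = (3 / 4 : ℝ) ^ (2 * n + δ) *
          (Real.Gamma (1 / 2) * Real.Gamma (2 * n + 1 + δ) /
            Real.Gamma (2 * n + δ + 1 / 2)) := by
  rcases hδ with rfl | rfl
  · trans (∑ k ∈ Finset.range (n+1), ((2*n)! : ℝ)^2 / ((4*n)! : ℝ) * ff (2*n) k)
    · refine Finset.sum_congr rfl fun k hk => ?_
      have hk' : k ≤ n := by
        have := Finset.mem_range.mp hk; omega
      simp only [Nat.cast_zero, mul_zero, add_zero, sub_zero]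
      rw [show -((4:ℝ)*(n:ℝ)) = -(((4*n:ℕ)):ℝ) from by push_cast; ring]
      rw [ascPochhammer_eval_one]
      have hA' : (ascPochhammer ℝ k).eval (-(n:ℝ))
          = (-1)^k * (n ! : ℝ) / ((n-k)! : ℝ) := (eq_div_iff (fne _)).mpr (pochL1 n k hk')
      have hBd : (4:ℝ)^k * (n ! : ℝ) * ((2*n-2*k)! : ℝ) ≠ 0 :=
        mul_ne_zero (mul_ne_zero (by positivity) (fne n)) (fne (2*n-2*k))
      have hB' : (ascPochhammer ℝ k).eval (1/2 - (n:ℝ))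
          = (-1)^k * ((2*n)! : ℝ) * ((n-k)! : ℝ) / ((4:ℝ)^k * (n ! : ℝ) * ((2*n-2*k)! : ℝ)) :=
        (eq_div_iff hBd).mpr (pochHalf n k hk')
      have hD' : (ascPochhammer ℝ k).eval (-(((4*n:ℕ)):ℝ))
          = (-1)^k * ((4*n)! : ℝ) / ((4*n-k)! : ℝ) :=
        (eq_div_iff (fne _)).mpr (pochL1 (4*n) k (by omega))
      rw [hA', hB', hD', ff, if_pos (show 2*k ≤ 2*n from by omega)]
      obtain ⟨i, rfl⟩ : ∃ i, n = k+i := ⟨n-k, by omega⟩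
      rw [show 2*(2*(k+i))-k+1 = 3*k+4*i+1 from by omega,
          show 4*(k+i)-k = 3*k+4*i from by omega,
          show 2*(k+i)+k+1 = 3*k+2*i+1 from by omega,
          show 2*(k+i)+k = 3*k+2*i from by omega,
          show 2*(k+i)-2*k = 2*i from by omega,
          show k+i-k = i from by omega]
      rw [fs1 (3*k+4*i), fs1 (3*k+2*i), div_pow]
      have h1 : ((3:ℝ))^k ≠ 0 := by positivity
      have h2 : ((4:ℝ))^k ≠ 0 := by positivity
      have h3 := fne i
      have h4 := fne (k+i)
      have h5 := fne (2*i)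
      have h6 := fne k
      have h7 := fne (3*k+4*i)
      have h8 := fne (4*(k+i))
      have h9 := fne (2*(k+i))
      have h10 := fne (3*k+2*i)
      have h11 : 2*((k:ℝ)+(i:ℝ))+(k:ℝ)+1 ≠ 0 := by positivity
      push_cast
      field_simp
      ring
    · rw [← Finset.mul_sum]
      have hext : ∑ k ∈ Finset.range (n+1), ff (2*n) k
          = ∑ k ∈ Finset.range (2*n+2), ff (2*n) k := by
        refine Finset.sum_subset (Finset.range_subset_range.mpr (by omega)) fun x _ hx => ?_
        rw [ff, if_neg]
        have := Finset.mem_range.not.mp hx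
        omega
      rw [hext, S_eq (2*n)]
      simp only [Nat.cast_zero, add_zero, Nat.add_zero]
      rw [Real.Gamma_one_half_eq]
      rw [show (2*(n:ℝ)+1) = ((2*n:ℕ):ℝ)+1 from by push_cast; ring,
        Real.Gamma_nat_eq_factorial]
      rw [show (2*(n:ℝ)+1/2) = ((2*n:ℕ):ℝ)+1/2 from by push_cast; ring]
      have hgd : (4:ℝ)^(2*n) * ((2*n)! : ℝ) ≠ 0 := mul_ne_zero (by positivity) (fne _)
      have hg' : Real.Gamma (((2*n:ℕ):ℝ)+1/2)
          = Real.sqrt Real.pi * ((2*(2*n))! : ℝ) / ((4:ℝ)^(2*n) * ((2*n)! : ℝ)) :=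
        (eq_div_iff hgd).mpr (gammaHalf (2*n))
      rw [show 2*(2*n) = 4*n from by ring] at hg'
      rw [hg', div_pow]
      have hsp : Real.sqrt Real.pi ≠ 0 := ne_of_gt (Real.sqrt_pos.mpr Real.pi_pos)
      have h1 := fne (2*n)
      have h2 := fne (4*n)
      have h3 : ((3:ℝ))^(2*n) ≠ 0 := by positivity
      have h4 : ((4:ℝ))^(2*n) ≠ 0 := by positivity
      field_simp
  · trans (∑ k ∈ Finset.range (n+1), ((2*n+1)! : ℝ)^2 / ((4*n+2)! : ℝ) * ff (2*n+1) k)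
    · refine Finset.sum_congr rfl fun k hk => ?_
      have hk' : k ≤ n := by
        have := Finset.mem_range.mp hk; omega
      simp only [Nat.cast_one, mul_one]
      rw [show (1:ℝ)/2 - 1 - (n:ℝ) = 1/2 - (((n+1:ℕ)):ℝ) from by push_cast; ring]
      rw [show -((4:ℝ)*(n:ℝ)) - 2 = -(((4*n+2:ℕ)):ℝ) from by push_cast; ring]
      rw [ascPochhammer_eval_one]
      have hA' : (ascPochhammer ℝ k).eval (-(n:ℝ))
          = (-1)^k * (n ! : ℝ) / ((n-k)! : ℝ) := (eq_div_iff (fne _)).mpr (pochL1 n k hk')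
      have hBd : (4:ℝ)^k * ((n+1)! : ℝ) * ((2*(n+1)-2*k)! : ℝ) ≠ 0 :=
        mul_ne_zero (mul_ne_zero (by positivity) (fne (n+1))) (fne (2*(n+1)-2*k))
      have hB' : (ascPochhammer ℝ k).eval (1/2 - (((n+1:ℕ)):ℝ))
          = (-1)^k * ((2*(n+1))! : ℝ) * (((n+1)-k)! : ℝ)
            / ((4:ℝ)^k * ((n+1)! : ℝ) * ((2*(n+1)-2*k)! : ℝ)) :=
        (eq_div_iff hBd).mpr (pochHalf (n+1) k (by omega))
      have hD' : (ascPochhammer ℝ k).eval (-(((4*n+2:ℕ)):ℝ))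
          = (-1)^k * ((4*n+2)! : ℝ) / ((4*n+2-k)! : ℝ) :=
        (eq_div_iff (fne _)).mpr (pochL1 (4*n+2) k (by omega))
      rw [hA', hB', hD', ff, if_pos (show 2*k ≤ 2*n+1 from by omega)]
      obtain ⟨i, rfl⟩ : ∃ i, n = k+i := ⟨n-k, by omega⟩
      rw [show 2*(2*(k+i)+1)-k+1 = 3*k+4*i+2+1 from by omega,
          show 4*(k+i)+2-k = 3*k+4*i+2 from by omega,
          show 2*(k+i)+1+k+1 = 3*k+2*i+1+1 from by omega,
          show 2*(k+i)+1+k = 3*k+2*i+1 from by omega,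
          show 2*(k+i)+1-2*k = 2*i+1 from by omega,
          show 2*(k+i+1)-2*k = 2*i+1+1 from by omega,
          show k+i+1-k = i+1 from by omega,
          show k+i-k = i from by omega,
          show 2*(k+i+1) = 2*(k+i)+1+1 from by omega]
      rw [fs1 (3*k+4*i+2), fs1 (3*k+2*i+1), fs1 (2*i+1), fs1 i, fs1 (k+i), fs1 (2*(k+i)+1),
        div_pow]
      have h1 : ((3:ℝ))^k ≠ 0 := by positivity
      have h2 : ((4:ℝ))^k ≠ 0 := by positivity
      have h3 := fne i
      have h4 := fne (k+i)
      have h5 := fne (2*i+1)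
      have h6 := fne k
      have h7 := fne (3*k+4*i+2)
      have h8 := fne (4*(k+i)+2)
      have h9 := fne (2*(k+i)+1)
      have h10 := fne (3*k+2*i+1)
      have h11 : 2*((k:ℝ)+(i:ℝ))+1+(k:ℝ)+1 ≠ 0 := by positivity
      push_cast
      field_simp
      ring
    · rw [← Finset.mul_sum]
      have hext : ∑ k ∈ Finset.range (n+1), ff (2*n+1) k
          = ∑ k ∈ Finset.range (2*n+1+2), ff (2*n+1) k := by
        refine Finset.sum_subset (Finset.range_subset_range.mpr (by omega)) fun x _ hx => ?_
        rw [ff, if_neg]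
        have := Finset.mem_range.not.mp hx
        omega
      rw [hext, S_eq (2*n+1)]
      simp only [Nat.cast_one]
      rw [Real.Gamma_one_half_eq]
      rw [show (2*(n:ℝ)+1+1) = ((2*n+1:ℕ):ℝ)+1 from by push_cast; ring,
        Real.Gamma_nat_eq_factorial]
      rw [show (2*(n:ℝ)+1+1/2) = ((2*n+1:ℕ):ℝ)+1/2 from by push_cast; ring]
      have hgd : (4:ℝ)^(2*n+1) * ((2*n+1)! : ℝ) ≠ 0 := mul_ne_zero (by positivity) (fne _)
      have hg' : Real.Gamma (((2*n+1:ℕ):ℝ)+1/2)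
          = Real.sqrt Real.pi * ((2*(2*n+1))! : ℝ) / ((4:ℝ)^(2*n+1) * ((2*n+1)! : ℝ)) :=
        (eq_div_iff hgd).mpr (gammaHalf (2*n+1))
      rw [show 2*(2*n+1) = 4*n+2 from by ring] at hg'
      rw [hg', div_pow]
      have hsp : Real.sqrt Real.pi ≠ 0 := ne_of_gt (Real.sqrt_pos.mpr Real.pi_pos)
      have h1 := fne (2*n+1)
      have h2 := fne (4*n+2)
      have h3 : ((3:ℝ))^(2*n+1) ≠ 0 := by positivity
      have h4 : ((4:ℝ))^(2*n+1) ≠ 0 := by positivity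
      field_simp
end

section
/- For every nonnegative integer n: ∑_{k=0}^{n} (3n+k+2) · (−n)_k(1/3−n)_k/[(1)_k(−3n)_k] · (9/8)^k = 3 · 2^{4/3−n} · Γ(2/3)Γ(7/6+n)/[Γ(1/2)Γ(1/3+n)]. -/
open Polynomial Finset

/-- summand without the linear factor -/
private noncomputable def pbJ (n k : ℕ) : ℝ :=
  ((ascPochhammer ℝ k).eval (-(n : ℝ)) * (ascPochhammer ℝ k).eval (1 / 3 - (n : ℝ))) /
    ((ascPochhammer ℝ k).eval 1 * (ascPochhammer ℝ k).eval (-(3 * n : ℝ))) * (9 / 8 : ℝ) ^ k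

private noncomputable def fJ (n k : ℕ) : ℝ := (3 * n + k + 2 : ℝ) * pbJ n k

private noncomputable def gJ (n : ℕ) : ℕ → ℝ
  | 0 => 0
  | (k+1) => (18*(n:ℝ)^2 - 6*n*(k+1) - 4*((k:ℝ)+1)^2 + 45*n - 15*((k:ℝ)+1) + 25) * pbJ n k

private lemma poch_eval_succ_left (x : ℝ) (k : ℕ) :
    (ascPochhammer ℝ (k+1)).eval x = x * (ascPochhammer ℝ k).eval (x+1) := by
  rw [ascPochhammer_succ_left, eval_mul, eval_X, eval_comp, eval_add, eval_X, eval_one]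

private lemma poch_ne_zero {x : ℝ} (k : ℕ) (h : ∀ j, j < k → x + j ≠ 0) :
    (ascPochhammer ℝ k).eval x ≠ 0 := by
  induction k with
  | zero => simp
  | succ m ih =>
      rw [ascPochhammer_succ_eval]
      exact mul_ne_zero (ih fun j hj => h j (hj.trans (Nat.lt_succ_self m)))
        (h m (Nat.lt_succ_self m))

private lemma poch_one_ne_zero (k : ℕ) : (ascPochhammer ℝ k).eval 1 ≠ 0 := by
  have : (ascPochhammer ℝ k).eval 1 = (k.factorial : ℝ) := by
    exact_mod_cast ascPochhammer_eval_one ℝ k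
  rw [this]
  positivity

private lemma poch_neg3n_ne_zero (n m : ℕ) (h : m ≤ 3 * n) :
    (ascPochhammer ℝ m).eval (-(3 * n : ℝ)) ≠ 0 := by
  apply poch_ne_zero
  intro j hj
  have hjn : j < 3 * n := hj.trans_le h
  have : (j : ℝ) < (3 * n : ℕ) := by exact_mod_cast hjn
  push_cast at this ⊢
  linarith

private lemma poch_neg_eval_zero (n m : ℕ) (h : n < m) :
    (ascPochhammer ℝ m).eval (-(n : ℝ)) = 0 := by
  induction m with
  | zero => omega
  | succ p ih =>
      rw [ascPochhammer_succ_eval]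
      rcases Nat.lt_or_ge n p with hp | hp
      · rw [ih hp, zero_mul]
      · have : p = n := by omega
        subst this
        simp

private lemma pbJ_zero_of_gt (n m : ℕ) (h : n < m) : pbJ n m = 0 := by
  unfold pbJ
  rw [poch_neg_eval_zero n m h, zero_mul, zero_div, zero_mul]

/-- the WZ pointwise identity, k = 0 case -/
private lemma wz_zero (n : ℕ) : gJ n 1 - gJ n 0 =
    4*(3*(n:ℝ)+1) * fJ (n+1) 0 - (6*n+7) * fJ n 0 := by
  have h0 : ∀ x : ℝ, (ascPochhammer ℝ 0).eval x = 1 := by simp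
  unfold gJ fJ pbJ
  simp only [h0, pow_zero, Nat.cast_zero, Nat.cast_add, Nat.cast_one]
  push_cast
  ring

private lemma hp2_core (N M A Bb K C C' w : ℝ) (hK : K ≠ 0) (hC : C ≠ 0) (hC' : C' ≠ 0)
    (hM : 1 + M ≠ 0) (hrel : C' * (-(3*N+3)+(M+1)) * (-(3*N+3)+(M+2)) = -(3*N+3) * -(3*N+2) * -(3*N+1) * C) :
    (-(N+1)) * A * ((1/3-(N+1)) * Bb) / (K*(1+M) * C') * (w*(9/8)) *
        ((1+M)*((-(3*N+3))*(-(3*N+2))*(-(3*N+1))))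
      = (-(N+1))*(1/3-(N+1))*(9/8)*((-(3*N+3)+(M+1))*(-(3*N+3)+(M+2))) * (A*Bb/(K*C)*w) := by
  have key : ((-(N+1)) * A * ((1/3-(N+1)) * Bb) * (w*(9/8)) *
        ((1+M)*((-(3*N+3))*(-(3*N+2))*(-(3*N+1))))) / (K*(1+M) * C')
      = ((-(N+1))*(1/3-(N+1))*(9/8)*((-(3*N+3)+(M+1))*(-(3*N+3)+(M+2))) * (A*Bb*w)) / (K*C) :=
    by
      rw [div_eq_div_iff (mul_ne_zero (mul_ne_zero hK hM) hC') (mul_ne_zero hK hC)]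
      linear_combination (-((-(N+1))*(1/3-(N+1))*(9/8)*A*Bb*w*(1+M)*K)) * hrel
  calc (-(N+1)) * A * ((1/3-(N+1)) * Bb) / (K*(1+M) * C') * (w*(9/8)) *
        ((1+M)*((-(3*N+3))*(-(3*N+2))*(-(3*N+1))))
      = ((-(N+1)) * A * ((1/3-(N+1)) * Bb) * (w*(9/8)) *
        ((1+M)*((-(3*N+3))*(-(3*N+2))*(-(3*N+1))))) / (K*(1+M) * C') := by ring
    _ = ((-(N+1))*(1/3-(N+1))*(9/8)*((-(3*N+3)+(M+1))*(-(3*N+3)+(M+2))) * (A*Bb*w)) / (K*C) := key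
    _ = (-(N+1))*(1/3-(N+1))*(9/8)*((-(3*N+3)+(M+1))*(-(3*N+3)+(M+2))) * (A*Bb/(K*C)*w) := by
        ring


private lemma wz_core (N M pb pb1 pb2 : ℝ)
    (hp1 : pb1 * ((1+M)*(-(3*N)+M)) = (-N+M)*(1/3-N+M)*(9/8) * pb)
    (hp2 : pb2 * ((1+M)*((-(3*N+3))*(-(3*N+2))*(-(3*N+1))))
      = (-(N+1))*(1/3-(N+1))*(9/8)*((-(3*N+3)+(M+1))*(-(3*N+3)+(M+2))) * pb)
    (hD : ((1+M)*(-(3*N)+M)) * ((1+M)*((-(3*N+3))*(-(3*N+2))*(-(3*N+1)))) ≠ 0) :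
    (18*N^2 - 6*N*(M+2) - 4*(M+2)^2 + 45*N - 15*(M+2) + 25) * pb1
      - (18*N^2 - 6*N*(M+1) - 4*(M+1)^2 + 45*N - 15*(M+1) + 25) * pb
    = 4*(3*N+1)*((3*(N+1)+(M+1)+2)*pb2) - (6*N+7)*((3*N+(M+1)+2)*pb1) := by
  rw [← sub_eq_zero]
  have G' : ((18*N^2 - 6*N*(M+2) - 4*(M+2)^2 + 45*N - 15*(M+2) + 25) * pb1
      - (18*N^2 - 6*N*(M+1) - 4*(M+1)^2 + 45*N - 15*(M+1) + 25) * pb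
      - (4*(3*N+1)*((3*(N+1)+(M+1)+2)*pb2) - (6*N+7)*((3*N+(M+1)+2)*pb1)))
      * (((1+M)*(-(3*N)+M)) * ((1+M)*((-(3*N+3))*(-(3*N+2))*(-(3*N+1))))) = 0 := by
    linear_combination
      (((18*N^2 - 6*N*(M+2) - 4*(M+2)^2 + 45*N - 15*(M+2) + 25)
          + (6*N+7)*(3*N+M+3)) * ((1+M)*((-(3*N+3))*(-(3*N+2))*(-(3*N+1))))) * hp1
      - (4*(3*N+1)*(3*N+M+6) * ((1+M)*(-(3*N)+M))) * hp2
  exact (mul_eq_zero.mp G').resolve_right hD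

set_option maxHeartbeats 2000000 in
private lemma wz_succ (n m : ℕ) (hn : 1 ≤ n) (hm : m ≤ n) :
    gJ n (m+2) - gJ n (m+1) =
    4*(3*(n:ℝ)+1) * fJ (n+1) (m+1) - (6*n+7) * fJ n (m+1) := by
  have hmn : (m : ℝ) ≤ (n : ℝ) := by exact_mod_cast hm
  have hn1 : (1 : ℝ) ≤ (n : ℝ) := by exact_mod_cast hn
  have h4 : (ascPochhammer ℝ (m+1)).eval (-(n:ℝ)) =
      (ascPochhammer ℝ m).eval (-(n:ℝ)) * (-(n:ℝ) + m) := by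
    rw [ascPochhammer_succ_eval]
  have h5 : (ascPochhammer ℝ (m+1)).eval (1/3 - (n:ℝ)) =
      (ascPochhammer ℝ m).eval (1/3 - (n:ℝ)) * (1/3 - (n:ℝ) + m) := by
    rw [ascPochhammer_succ_eval]
  have h6 : (ascPochhammer ℝ (m+1)).eval (-(3*(n:ℝ))) =
      (ascPochhammer ℝ m).eval (-(3*(n:ℝ))) * (-(3*(n:ℝ)) + m) := by
    rw [ascPochhammer_succ_eval]
  have h3 : (ascPochhammer ℝ (m+1)).eval (1:ℝ) =
      (ascPochhammer ℝ m).eval (1:ℝ) * (1 + m) := by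
    rw [ascPochhammer_succ_eval]
  have h1 : (ascPochhammer ℝ (m+1)).eval (-((n:ℝ)+1)) =
      (-((n:ℝ)+1)) * (ascPochhammer ℝ m).eval (-(n:ℝ)) := by
    rw [poch_eval_succ_left, show (-((n:ℝ)+1)+1 : ℝ) = -(n:ℝ) by ring]
  have h2 : (ascPochhammer ℝ (m+1)).eval (1/3 - ((n:ℝ)+1)) =
      (1/3 - ((n:ℝ)+1)) * (ascPochhammer ℝ m).eval (1/3 - (n:ℝ)) := by
    rw [poch_eval_succ_left, show (1/3 - ((n:ℝ)+1)+1 : ℝ) = 1/3 - (n:ℝ) by ring]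
  have hrel : (ascPochhammer ℝ (m+1)).eval (-(3*(n:ℝ)+3)) *
        ((-(3*(n:ℝ)+3)) + ((m:ℝ)+1)) * ((-(3*(n:ℝ)+3)) + ((m:ℝ)+2))
      = (-(3*(n:ℝ)+3)) * (-(3*(n:ℝ)+2)) * (-(3*(n:ℝ)+1)) *
        (ascPochhammer ℝ m).eval (-(3*(n:ℝ))) := by
    have e1 : (ascPochhammer ℝ (m+3)).eval (-(3*(n:ℝ)+3))
        = (ascPochhammer ℝ (m+1)).eval (-(3*(n:ℝ)+3)) *
          ((-(3*(n:ℝ)+3)) + ((m:ℝ)+1)) * ((-(3*(n:ℝ)+3)) + ((m:ℝ)+2)) := by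
      rw [show m+3 = (m+2)+1 by ring, ascPochhammer_succ_eval,
        show m+2 = (m+1)+1 by ring, ascPochhammer_succ_eval]
      push_cast
      ring
    have e2 : (ascPochhammer ℝ (m+3)).eval (-(3*(n:ℝ)+3))
        = (-(3*(n:ℝ)+3)) * (-(3*(n:ℝ)+2)) * (-(3*(n:ℝ)+1)) *
          (ascPochhammer ℝ m).eval (-(3*(n:ℝ))) := by
      rw [show m+3 = (m+2)+1 by ring, poch_eval_succ_left,
        show (-(3*(n:ℝ)+3)+1 : ℝ) = -(3*(n:ℝ)+2) by ring,
        show m+2 = (m+1)+1 by ring, poch_eval_succ_left,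
        show (-(3*(n:ℝ)+2)+1 : ℝ) = -(3*(n:ℝ)+1) by ring,
        poch_eval_succ_left, show (-(3*(n:ℝ)+1)+1 : ℝ) = -(3*(n:ℝ)) by ring]
      ring
    rw [← e1, e2]
  have hK : (ascPochhammer ℝ m).eval (1:ℝ) ≠ 0 := poch_one_ne_zero m
  have hC : (ascPochhammer ℝ m).eval (-(3*(n:ℝ))) ≠ 0 := by
    have := poch_neg3n_ne_zero n m (by omega)
    push_cast at this
    exact this
  have hK1 : (1 + (m:ℝ)) ≠ 0 := by positivity
  have hCk : (-(3*(n:ℝ)) + (m:ℝ)) ≠ 0 := by intro h; nlinarith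
  have hd1 : ((-(3*(n:ℝ)+3)) + ((m:ℝ)+1)) ≠ 0 := by intro h; nlinarith
  have hd2 : ((-(3*(n:ℝ)+3)) + ((m:ℝ)+2)) ≠ 0 := by intro h; nlinarith
  have hc' : (ascPochhammer ℝ (m+1)).eval (-(3*(n:ℝ)+3)) =
      ((-(3*(n:ℝ)+3)) * (-(3*(n:ℝ)+2)) * (-(3*(n:ℝ)+1)) *
        (ascPochhammer ℝ m).eval (-(3*(n:ℝ)))) /
      (((-(3*(n:ℝ)+3)) + ((m:ℝ)+1)) * ((-(3*(n:ℝ)+3)) + ((m:ℝ)+2))) := by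
    rw [eq_div_iff (mul_ne_zero hd1 hd2), ← mul_assoc]
    exact hrel
  have hz1 : (-(3*(n:ℝ)+3)) ≠ 0 := by intro h; nlinarith
  have hz2 : (-(3*(n:ℝ)+2)) ≠ 0 := by intro h; nlinarith
  have hz3 : (-(3*(n:ℝ)+1)) ≠ 0 := by intro h; nlinarith
  have hp1 : pbJ n (m+1) * ((1+(m:ℝ))*(-(3*(n:ℝ))+(m:ℝ)))
      = (-(n:ℝ)+(m:ℝ))*(1/3-(n:ℝ)+(m:ℝ))*(9/8) * pbJ n m := by
    unfold pbJ
    push_cast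
    rw [h4, h5, h6, h3, pow_succ]
    generalize (ascPochhammer ℝ m).eval (-(3*(n:ℝ))) = C at hC ⊢
    field_simp
    exact mul_div_cancel_right₀ _ (by intro h; apply hCk; linarith)
  have hC'ne : (ascPochhammer ℝ (m+1)).eval (-(3*(n:ℝ)+3)) ≠ 0 := by
    have h := poch_neg3n_ne_zero (n+1) (m+1) (by omega)
    push_cast at h
    rw [show (-(3*((n:ℝ)+1))) = -(3*(n:ℝ)+3) from by ring] at h
    exact h
  have hp2 : pbJ (n+1) (m+1) * ((1+(m:ℝ))*((-(3*(n:ℝ)+3))*(-(3*(n:ℝ)+2))*(-(3*(n:ℝ)+1))))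
      = (-((n:ℝ)+1))*(1/3-((n:ℝ)+1))*(9/8)*
        (((-(3*(n:ℝ)+3)) + ((m:ℝ)+1))*((-(3*(n:ℝ)+3)) + ((m:ℝ)+2))) * pbJ n m := by
    unfold pbJ
    push_cast
    rw [show (-(3*((n:ℝ)+1))) = -(3*(n:ℝ)+3) from by ring]
    rw [h1, h2, h3, pow_succ]
    have hcore := hp2_core (n:ℝ) (m:ℝ) ((ascPochhammer ℝ m).eval (-(n:ℝ)))
      ((ascPochhammer ℝ m).eval (1/3-(n:ℝ))) ((ascPochhammer ℝ m).eval (1:ℝ))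
      ((ascPochhammer ℝ m).eval (-(3*(n:ℝ)))) ((ascPochhammer ℝ (m+1)).eval (-(3*(n:ℝ)+3)))
      (((9:ℝ)/8)^m) hK hC hC'ne hK1 hrel
    linear_combination hcore
  have hg2 : gJ n (m+2) = (18*(n:ℝ)^2 - 6*(n:ℝ)*((m:ℝ)+2) - 4*((m:ℝ)+2)^2
      + 45*(n:ℝ) - 15*((m:ℝ)+2) + 25) * pbJ n (m+1) := by
    show (18*(n:ℝ)^2 - 6*(n:ℝ)*(((m+1:ℕ):ℝ)+1) - 4*(((m+1:ℕ):ℝ)+1)^2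
      + 45*(n:ℝ) - 15*(((m+1:ℕ):ℝ)+1) + 25) * pbJ n (m+1) = _
    push_cast
    ring_nf
  have hg1 : gJ n (m+1) = (18*(n:ℝ)^2 - 6*(n:ℝ)*((m:ℝ)+1) - 4*((m:ℝ)+1)^2
      + 45*(n:ℝ) - 15*((m:ℝ)+1) + 25) * pbJ n m := by
    show (18*(n:ℝ)^2 - 6*(n:ℝ)*((m:ℝ)+1) - 4*((m:ℝ)+1)^2
      + 45*(n:ℝ) - 15*((m:ℝ)+1) + 25) * pbJ n m = _
    push_cast
    ring_nf
  have hD : ((1+(m:ℝ))*(-(3*(n:ℝ))+(m:ℝ))) *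
      ((1+(m:ℝ))*((-(3*(n:ℝ)+3))*(-(3*(n:ℝ)+2))*(-(3*(n:ℝ)+1)))) ≠ 0 :=
    mul_ne_zero (mul_ne_zero hK1 hCk)
      (mul_ne_zero hK1 (mul_ne_zero (mul_ne_zero hz1 hz2) hz3))
  have core := wz_core (n:ℝ) (m:ℝ) (pbJ n m) (pbJ n (m+1)) (pbJ (n+1) (m+1)) hp1 hp2 hD
  rw [hg2, hg1]
  unfold fJ
  push_cast
  linear_combination core


private lemma key_rec (n : ℕ) (hn : 1 ≤ n) :
    4*(3*(n:ℝ)+1) * (∑ k ∈ range (n+2), fJ (n+1) k)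
      = (6*n+7) * (∑ k ∈ range (n+1), fJ n k) := by
  have tele : ∑ k ∈ range (n+2), (gJ n (k+1) - gJ n k) = gJ n (n+2) - gJ n 0 :=
    Finset.sum_range_sub (gJ n) (n+2)
  have pt : ∀ k ∈ range (n+2), gJ n (k+1) - gJ n k
      = 4*(3*(n:ℝ)+1) * fJ (n+1) k - (6*n+7) * fJ n k := by
    intro k hk
    rcases k with _ | m
    · exact wz_zero n
    · exact wz_succ n m hn (by simpa using Nat.lt_succ_iff.mp (mem_range.mp hk))
  rw [Finset.sum_congr rfl pt] at tele
  rw [Finset.sum_sub_distrib, ← Finset.mul_sum, ← Finset.mul_sum] at tele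
  have hg2 : gJ n (n+2) = 0 := by
    show (_:ℝ) * pbJ n (n+1) = 0
    rw [pbJ_zero_of_gt n (n+1) (Nat.lt_succ_self n), mul_zero]
  have hf : fJ n (n+1) = 0 := by
    unfold fJ; rw [pbJ_zero_of_gt n (n+1) (Nat.lt_succ_self n), mul_zero]
  have hg0 : gJ n 0 = 0 := rfl
  have hsplit : ∑ i ∈ range (n+2), fJ n i = (∑ i ∈ range (n+1), fJ n i) + fJ n (n+1) :=
    Finset.sum_range_succ _ _
  rw [hg2, hg0, hsplit, hf, add_zero] at tele
  linarith [tele]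

private lemma gammaRHS_rec (n : ℕ) :
    3 * (2 : ℝ) ^ ((4 : ℝ) / 3 - ((n:ℝ)+1)) *
          (Real.Gamma (2 / 3) * Real.Gamma (7 / 6 + ((n:ℝ)+1)) /
            (Real.Gamma (1 / 2) * Real.Gamma (1 / 3 + ((n:ℝ)+1))))
    = (6*(n:ℝ)+7)/(4*(3*n+1)) * (3 * (2 : ℝ) ^ ((4 : ℝ) / 3 - (n : ℝ)) *
          (Real.Gamma (2 / 3) * Real.Gamma (7 / 6 + n) /
            (Real.Gamma (1 / 2) * Real.Gamma (1 / 3 + n)))) := by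
  have h1 : Real.Gamma (7/6 + ((n:ℝ)+1)) = (7/6 + n) * Real.Gamma (7/6 + n) := by
    rw [show (7/6 + ((n:ℝ)+1)) = (7/6 + (n:ℝ)) + 1 by ring]
    exact Real.Gamma_add_one (by positivity)
  have h2 : Real.Gamma (1/3 + ((n:ℝ)+1)) = (1/3 + n) * Real.Gamma (1/3 + n) := by
    rw [show (1/3 + ((n:ℝ)+1)) = (1/3 + (n:ℝ)) + 1 by ring]
    exact Real.Gamma_add_one (by positivity)
  have h3 : (2:ℝ) ^ ((4:ℝ)/3 - ((n:ℝ)+1)) = (2:ℝ) ^ ((4:ℝ)/3 - (n:ℝ)) / 2 := by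
    rw [show (4:ℝ)/3 - ((n:ℝ)+1) = ((4:ℝ)/3 - n) - 1 by ring,
      Real.rpow_sub (by norm_num), Real.rpow_one]
  have hb : Real.Gamma (1/3 + (n:ℝ)) ≠ 0 := (Real.Gamma_pos_of_pos (by positivity)).ne'
  have hc : (0:ℝ) < 3*(n:ℝ)+1 := by positivity
  rw [h1, h2, h3]
  field_simp
  ring

private lemma gamma_const :
    3 * (2:ℝ)^((4:ℝ)/3) * (Real.Gamma (2/3) * Real.Gamma (7/6) /
      (Real.Gamma (1/2) * Real.Gamma (1/3))) = 2 := by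
  have hd := Real.Gamma_mul_Gamma_add_half (1/6)
  norm_num at hd
  have h76 : Real.Gamma (7/6) = (1/6) * Real.Gamma (1/6) := by
    have h := Real.Gamma_add_one (s := 1/6) (by norm_num)
    norm_num at h ⊢
    linarith
  have h12 : Real.Gamma (1/2) = Real.sqrt Real.pi := Real.Gamma_one_half_eq
  have hg3 : Real.Gamma (1/3) ≠ 0 := (Real.Gamma_pos_of_pos (by norm_num)).ne'
  have hsp : Real.sqrt Real.pi ≠ 0 := by positivity
  have hpow : (2:ℝ)^((4:ℝ)/3) * (2:ℝ)^((2:ℝ)/3) = 4 := by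
    rw [← Real.rpow_add (by norm_num)]
    norm_num
  rw [h76, h12, show Real.Gamma (2/3) * (1/6 * Real.Gamma (1/6))
      = 1/6*(Real.Gamma (1/3) * 2^((2:ℝ)/3) * Real.sqrt Real.pi) from by
    linear_combination (1/6)*hd]
  field_simp
  linear_combination 3 * hpow

theorem strange_identity_J (n : ℕ) :
    ∑ k ∈ Finset.range (n + 1),
      ((3 * n + k + 2 : ℝ)) *
        ((ascPochhammer ℝ k).eval (-(n : ℝ)) * (ascPochhammer ℝ k).eval (1 / 3 - (n : ℝ))) /
        ((ascPochhammer ℝ k).eval 1 * (ascPochhammer ℝ k).eval (-(3 * n : ℝ))) *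
        (9 / 8 : ℝ) ^ k
      = 3 * (2 : ℝ) ^ ((4 : ℝ) / 3 - (n : ℝ)) *
          (Real.Gamma (2 / 3) * Real.Gamma (7 / 6 + n) /
            (Real.Gamma (1 / 2) * Real.Gamma (1 / 3 + n))) := by
  have hsum : ∀ m : ℕ, ∑ k ∈ Finset.range (m + 1),
      ((3 * m + k + 2 : ℝ)) *
        ((ascPochhammer ℝ k).eval (-(m : ℝ)) * (ascPochhammer ℝ k).eval (1 / 3 - (m : ℝ))) /
        ((ascPochhammer ℝ k).eval 1 * (ascPochhammer ℝ k).eval (-(3 * m : ℝ))) *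
        (9 / 8 : ℝ) ^ k = ∑ k ∈ Finset.range (m+1), fJ m k := by
    intro m
    refine Finset.sum_congr rfl fun k _ => ?_
    unfold fJ pbJ
    ring
  rw [hsum]
  induction n with
  | zero =>
      have h0 : ∑ k ∈ Finset.range (0+1), fJ 0 k = 2 := by
        rw [Finset.sum_range_one]
        unfold fJ pbJ
        norm_num
      rw [h0]
      norm_num
      exact gamma_const.symm
  | succ m ih =>
      rcases Nat.eq_zero_or_pos m with rfl | hm
      · -- n = 1 explicit
        have hS1 : ∑ k ∈ Finset.range 2, fJ 1 k = 7/2 := by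
          rw [Finset.sum_range_succ, Finset.sum_range_one]
          unfold fJ pbJ
          norm_num [ascPochhammer_one]
        have hS0 : ∑ k ∈ Finset.range 1, fJ 0 k = 2 := by
          rw [Finset.sum_range_one]
          unfold fJ pbJ
          norm_num
        rw [hS0] at ih
        rw [hS1]
        have hr := gammaRHS_rec 0
        norm_num at hr ⊢
        rw [hr, gamma_const]
        norm_num
      · have hrec := key_rec m hm
        have hR := gammaRHS_rec m
        have hc : (0:ℝ) < 4*(3*(m:ℝ)+1) := by positivity
        push_cast at ih hR ⊢
        calc ∑ k ∈ Finset.range (m+1+1), fJ (m+1) k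
            = (6*(m:ℝ)+7)/(4*(3*m+1)) * (∑ k ∈ Finset.range (m+1), fJ m k) := by
              field_simp
              linarith [hrec]
          _ = (6*(m:ℝ)+7)/(4*(3*m+1)) * (3 * (2 : ℝ) ^ ((4 : ℝ) / 3 - (m : ℝ)) *
              (Real.Gamma (2 / 3) * Real.Gamma (7 / 6 + m) /
                (Real.Gamma (1 / 2) * Real.Gamma (1 / 3 + m)))) := by rw [ih]
          _ = _ := by rw [← hR]
end

section
/- For every nonnegative integer n and every complex number t: ∑_{k=0}^{n} (−n)_k/(1)_k · t^k · H_k = (1−t)^n·H_n − ∑_{k=1}^{n} (1−t)^{n−k}/k, where H_k = ∑_{j=1}^{k} 1/j is the k-th harmonic number and (x)_k is the Pochhammer symbol (note (−n)_k/(1)_k = (−1)^k·C(n,k)). -/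
open Finset

private lemma poch_ratio (n k : ℕ) :
    (ascPochhammer ℂ k).eval (-(n : ℂ)) / (ascPochhammer ℂ k).eval 1
      = (-1) ^ k * (n.choose k : ℂ) := by
  have hk : (k.factorial : ℂ) ≠ 0 := by exact_mod_cast Nat.factorial_ne_zero k
  rw [ascPochhammer_eval_neg_eq_descPochhammer, descPochhammer_eval_eq_descFactorial,
    ascPochhammer_eval_one, Nat.descFactorial_eq_factorial_mul_choose]
  push_cast
  field_simp

private lemma aux1 (n : ℕ) (t : ℂ) :
    ∑ k ∈ range (n + 1), (-1) ^ k * (n.choose k : ℂ) * t ^ (k + 1) / ((k : ℂ) + 1)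
      = (1 - (1 - t) ^ (n + 1)) / ((n : ℂ) + 1) := by
  have hn : ((n : ℂ) + 1) ≠ 0 := Nat.cast_add_one_ne_zero n
  rw [eq_div_iff hn, Finset.sum_mul]
  have hterm : ∀ k ∈ range (n + 1),
      (-1) ^ k * (n.choose k : ℂ) * t ^ (k + 1) / ((k : ℂ) + 1) * ((n : ℂ) + 1)
        = (-1) ^ k * (((n + 1).choose (k + 1) : ℂ)) * t ^ (k + 1) := by
    intro k _
    have hk : ((k : ℂ) + 1) ≠ 0 := Nat.cast_add_one_ne_zero k
    have hc : ((n : ℂ) + 1) * (n.choose k : ℂ) = ((n + 1).choose (k + 1) : ℂ) * ((k : ℂ) + 1) := by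
      exact_mod_cast congrArg (Nat.cast (R := ℂ)) (Nat.add_one_mul_choose_eq n k)
    rw [div_mul_eq_mul_div, div_eq_iff hk]
    linear_combination ((-1 : ℂ)) ^ k * t ^ (k + 1) * hc
  rw [Finset.sum_congr rfl hterm]
  have hbin : (1 - t) ^ (n + 1)
      = ∑ m ∈ range (n + 2), (-1) ^ m * ((n + 1).choose m : ℂ) * t ^ m := by
    rw [sub_eq_add_neg, add_comm, add_pow]
    refine Finset.sum_congr rfl fun m _ => ?_
    rw [neg_pow, one_pow]
    ring
  have hshift := Finset.sum_range_succ' (fun m => (-1) ^ m * ((n + 1).choose m : ℂ) * t ^ m) (n + 1)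
  have hneg : ∑ k ∈ range (n + 1), (-1) ^ (k + 1) * ((n + 1).choose (k + 1) : ℂ) * t ^ (k + 1)
      = -∑ k ∈ range (n + 1), (-1) ^ k * ((n + 1).choose (k + 1) : ℂ) * t ^ (k + 1) := by
    rw [← Finset.sum_neg_distrib]
    exact Finset.sum_congr rfl fun k _ => by ring
  rw [hbin, hshift, hneg]
  simp only [pow_zero, Nat.choose_zero_right, Nat.cast_one, mul_one, one_mul]
  ring

private lemma aux2 (n : ℕ) (t : ℂ) :
    ∑ k ∈ range (n + 1),
      (-1) ^ k * (n.choose k : ℂ) * t ^ k * (∑ j ∈ range k, 1 / ((j : ℂ) + 1))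
      = (1 - t) ^ n * (∑ j ∈ range n, 1 / ((j : ℂ) + 1))
          - ∑ k ∈ Finset.Icc 1 n, (1 - t) ^ (n - k) / (k : ℂ) := by
  induction n with
  | zero => simp
  | succ n ih =>
    set H : ℕ → ℂ := fun m => ∑ j ∈ range m, 1 / ((j : ℂ) + 1) with hH
    have hHsucc : ∀ m : ℕ, H (m + 1) = H m + 1 / ((m : ℂ) + 1) := fun m =>
      Finset.sum_range_succ _ m
    rw [Finset.sum_range_succ' (fun k => (-1) ^ k * ((n + 1).choose k : ℂ) * t ^ k * H k) (n + 1)]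
    have hsplit : ∀ i ∈ range (n + 1),
        (-1) ^ (i + 1) * ((n + 1).choose (i + 1) : ℂ) * t ^ (i + 1) * H (i + 1)
          = (-1) * t * ((-1) ^ i * (n.choose i : ℂ) * t ^ i * H i)
            + (-1) * ((-1) ^ i * (n.choose i : ℂ) * t ^ (i + 1) / ((i : ℂ) + 1))
            + (-1) * ((-1) ^ i * (n.choose (i + 1) : ℂ) * t ^ (i + 1) * H (i + 1)) := by
      intro i _
      rw [Nat.choose_succ_succ, hHsucc i]
      push_cast
      ring
    rw [Finset.sum_congr rfl hsplit, Finset.sum_add_distrib, Finset.sum_add_distrib,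
      ← Finset.mul_sum, ← Finset.mul_sum, ← Finset.mul_sum]
    have hthird : ∑ i ∈ range (n + 1), (-1) ^ i * (n.choose (i + 1) : ℂ) * t ^ (i + 1) * H (i + 1)
        = -(∑ k ∈ range (n + 1), (-1) ^ k * (n.choose k : ℂ) * t ^ k * H k) := by
      have h2 := Finset.sum_range_succ'
        (fun k => (-1) ^ k * (n.choose k : ℂ) * t ^ k * H k) (n + 1)
      have h3 : ∑ k ∈ range (n + 2), (-1) ^ k * (n.choose k : ℂ) * t ^ k * H k
          = ∑ k ∈ range (n + 1), (-1) ^ k * (n.choose k : ℂ) * t ^ k * H k := by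
        rw [Finset.sum_range_succ]
        simp [Nat.choose_succ_self]
      have h4 : ∑ i ∈ range (n + 1),
          (-1) ^ (i + 1) * (n.choose (i + 1) : ℂ) * t ^ (i + 1) * H (i + 1)
          = -∑ i ∈ range (n + 1), (-1) ^ i * (n.choose (i + 1) : ℂ) * t ^ (i + 1) * H (i + 1) := by
        rw [← Finset.sum_neg_distrib]
        exact Finset.sum_congr rfl fun i _ => by ring
      have h0 : ((-1 : ℂ)) ^ 0 * ((n.choose 0 : ℕ) : ℂ) * t ^ 0 * H 0 = 0 := by simp [hH]
      rw [h3, h4, h0, add_zero] at h2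
      linear_combination h2
    have hicc : ∑ k ∈ Finset.Icc 1 (n + 1), (1 - t) ^ (n + 1 - k) / (k : ℂ)
        = (1 - t) * ∑ k ∈ Finset.Icc 1 n, (1 - t) ^ (n - k) / (k : ℂ) + 1 / ((n : ℂ) + 1) := by
      rw [Finset.sum_Icc_succ_top (by omega : 1 ≤ n + 1), Finset.mul_sum]
      have : ∀ k ∈ Finset.Icc 1 n, (1 - t) ^ (n + 1 - k) / (k : ℂ)
          = (1 - t) * ((1 - t) ^ (n - k) / (k : ℂ)) := by
        intro k hk
        rw [Finset.mem_Icc] at hk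
        rw [show n + 1 - k = (n - k) + 1 by omega, pow_succ]
        ring
      rw [Finset.sum_congr rfl this]
      push_cast
      simp
    have hHn : ∑ j ∈ range (n + 1), 1 / ((j : ℂ) + 1)
        = (∑ j ∈ range n, 1 / ((j : ℂ) + 1)) + 1 / ((n : ℂ) + 1) := Finset.sum_range_succ _ n
    rw [hthird, ih, hicc, hHn]
    have h0 : ((-1 : ℂ)) ^ 0 * (((n + 1).choose 0 : ℕ) : ℂ) * t ^ 0 * H 0 = 0 := by simp [hH]
    rw [h0]
    have h1 := aux1 n t
    rw [h1]
    have hn : ((n : ℂ) + 1) ≠ 0 := Nat.cast_add_one_ne_zero n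
    field_simp
    ring

theorem harmonic_binomial_identity (n : ℕ) (t : ℂ) :
    ∑ k ∈ Finset.range (n + 1),
      (ascPochhammer ℂ k).eval (-(n : ℂ)) / (ascPochhammer ℂ k).eval 1 * t ^ k *
        (∑ j ∈ Finset.range k, 1 / ((j : ℂ) + 1))
      = (1 - t) ^ n * (∑ j ∈ Finset.range n, 1 / ((j : ℂ) + 1))
          - ∑ k ∈ Finset.Icc 1 n, (1 - t) ^ (n - k) / (k : ℂ) := by
  rw [← aux2]
  exact Finset.sum_congr rfl fun k _ => by rw [poch_ratio]
end

section
/- For any prime p > 3: ∑_{k=0}^{p−1} (1/3)_k/k! · 2^k − ∑_{k=0}^{p−1} (2/3)_k/k! · 2^k ≡ 2^p − 2 (mod p²), where (x)_k is the Pochhammer symbol and the sums are taken in ℤ_p. -/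
open Finset Polynomial
set_option linter.unusedSectionVars false
set_option linter.unusedTactic false
set_option linter.unnecessarySeqFocus false

section Generic
variable {A : Type*} [CommRing A]

lemma aux_poch_neg (m : ℕ) : ∀ k : ℕ,
    (ascPochhammer A k).eval (-(m:A)) = (-1)^k * (m.descFactorial k : A)
  | 0 => by simp
  | (k+1) => by
    rw [ascPochhammer_succ_eval, aux_poch_neg m k, Nat.descFactorial_succ]
    rcases le_or_gt k m with h | h
    · have : ((m - k : ℕ) : A) = (m:A) - (k:A) := by push_cast [Nat.cast_sub h]; ring
      push_cast [this]; ring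
    · rw [Nat.descFactorial_eq_zero_iff_lt.2 h, Nat.sub_eq_zero_of_le h.le]
      push_cast; ring

lemma aux_sum_poch_neg (P m : ℕ) (hm : m < P) (b : ℕ → A)
    (hb : ∀ k, k ≤ m → (k.factorial : A) * b k = 1) :
    ∑ k ∈ range P, (ascPochhammer A k).eval (-(m:A)) * (b k * 2^k) = (-1)^m := by
  have hsub : range (m+1) ⊆ range P := Finset.range_subset_range.2 hm
  have hvan : ∀ k ∈ range P, k ∉ range (m+1) →
      (ascPochhammer A k).eval (-(m:A)) * (b k * 2^k) = 0 := by
    intro k _ hk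
    rw [aux_poch_neg, Nat.descFactorial_eq_zero_iff_lt.2 (by
      simp only [Finset.mem_range] at hk; omega)]
    simp
  rw [← Finset.sum_subset hsub hvan]
  have key : ∀ k ∈ range (m+1),
      (ascPochhammer A k).eval (-(m:A)) * (b k * 2^k)
        = (-2:A)^k * 1^(m-k) * (m.choose k) := by
    intro k hk
    have hkm : k ≤ m := by simp only [Finset.mem_range] at hk; omega
    have hbk := hb k hkm
    have h2 : ((-2:A))^k = (-1)^k * 2^k := by rw [neg_pow]
    rw [aux_poch_neg, Nat.descFactorial_eq_factorial_mul_choose, one_pow]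
    push_cast
    linear_combination ((m.choose k : A) * (-1:A)^k * 2^k) * hbk - (m.choose k : A) * h2
  rw [Finset.sum_congr rfl key, ← add_pow]
  norm_num

lemma aux_SS (n : ℕ) : ∀ K : ℕ,
    (∑ k ∈ range (K+1), (n+1+k).choose k * 2^k)
      + (∑ k ∈ range (K+1), (n+k).choose k * 2^k)
      = 2^(K+1) * (n+K+1).choose K
  | 0 => by simp
  | (K+1) => by
    have IH := aux_SS n K
    have pas : (n+K+2).choose (K+1) = (n+K+1).choose K + (n+K+1).choose (K+1) := by
      rw [show n+K+2 = (n+K+1)+1 by omega]; exact Nat.choose_succ_succ' (n+K+1) K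
    rw [Finset.sum_range_succ (fun k => (n+1+k).choose k * 2^k) (K+1),
        Finset.sum_range_succ (fun k => (n+k).choose k * 2^k) (K+1)]
    have e1 : n+1+(K+1) = n+K+2 := by omega
    have e2 : n+(K+1) = n+K+1 := by omega
    have e3 : n+K+1+1 = n+K+2 := by omega
    rw [e1, e2, e3]
    have epow : (2:ℕ)^(K+1+1) = 2*2^(K+1) := by ring
    zify at IH pas epow ⊢
    linear_combination IH + (-((2:ℤ)^(K+1))) * pas + ((n+K+2).choose (K+1) : ℤ) * epow

lemma aux_geom : ∀ K : ℕ, (∑ k ∈ range K, 2^k) + 1 = 2^K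
  | 0 => by simp
  | (K+1) => by rw [Finset.sum_range_succ]; have := aux_geom K; omega

end Generic

variable {p : ℕ} [Fact p.Prime]

lemma aux_pdvd_iff (x : ℤ_[p]) : (p:ℤ_[p]) ∣ x ↔ PadicInt.toZMod x = 0 := by
  rw [← Ideal.mem_span_singleton, ← PadicInt.maximalIdeal_eq_span_p, ← PadicInt.ker_toZMod,
    RingHom.mem_ker]

lemma aux_isUnit_natCast (m : ℕ) (h : ¬ p ∣ m) : IsUnit (m : ℤ_[p]) := by
  rw [PadicInt.isUnit_iff]
  refine le_antisymm (PadicInt.norm_le_one _) ?_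
  by_contra hlt
  push_neg at hlt
  have : ‖((m:ℤ) : ℤ_[p])‖ < 1 := by push_cast; exact hlt
  rw [PadicInt.norm_int_lt_one_iff_dvd] at this
  exact h (by exact_mod_cast this)

lemma aux_mulinv (m : ℕ) (h : ¬ p ∣ m) :
    (m : ℤ_[p]) * Ring.inverse (m : ℤ_[p]) = 1 :=
  Ring.mul_inverse_cancel _ (aux_isUnit_natCast m h)

lemma aux_pi_inv (m : ℕ) (h : ¬ p ∣ m) :
    PadicInt.toZMod (Ring.inverse (m : ℤ_[p])) = ((m : ZMod p))⁻¹ := by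
  have := congrArg PadicInt.toZMod (aux_mulinv (p := p) m h)
  rw [map_mul, map_one, map_natCast] at this
  exact eq_inv_of_mul_eq_one_right this

lemma aux_fermat : (p:ℤ_[p]) ∣ (2:ℤ_[p])^p - 2 := by
  rw [aux_pdvd_iff, map_sub, map_pow]
  have h2 : (PadicInt.toZMod (2 : ℤ_[p])) = (2 : ZMod p) := by
    rw [show (2:ℤ_[p]) = ((2:ℕ):ℤ_[p]) by norm_num, map_natCast]; norm_num
  rw [h2, ZMod.pow_card]; ring

lemma aux_ch : ∀ j : ℕ, j ≤ p - 1 → ((p-1).choose j : ZMod p) = (-1)^j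
  | 0, _ => by simp
  | (j+1), hj => by
    have hp := (Fact.out : p.Prime)
    have hp2 : 2 ≤ p := hp.two_le
    have IH := aux_ch j (by omega)
    have pas : p.choose (j+1) = (p-1).choose j + (p-1).choose (j+1) := by
      have := Nat.choose_succ_succ' (p-1) j
      rwa [show p-1+1 = p by omega] at this
    have hdvd : p ∣ p.choose (j+1) := Nat.Prime.dvd_choose_self hp (by omega) (by omega)
    have h0 : ((p.choose (j+1) : ℕ) : ZMod p) = 0 := (ZMod.natCast_eq_zero_iff _ _).2 hdvd
    rw [pas] at h0
    push_cast at h0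
    rw [IH] at h0
    have : ((p-1).choose (j+1) : ZMod p) = -(-1)^j := by linear_combination h0
    rw [this]; ring

lemma aux_ch' (j : ℕ) (hj : j ≤ p - 1) :
    (p:ℤ_[p]) ∣ ((p-1).choose j : ℤ_[p]) - (-1)^j := by
  rw [aux_pdvd_iff, map_sub, map_natCast, map_pow, map_neg, map_one, aux_ch j hj]
  ring

lemma aux_W (j : ℕ) (hp2 : 2 ≤ p) :
    p * ((∏ i ∈ range j, (p+1+i)) * (p-1).factorial) = (p+j).factorial := by
  induction j with
  | zero =>
    have h : (p-1+1).factorial = (p-1+1) * (p-1).factorial := Nat.factorial_succ _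
    rw [show p-1+1 = p by omega] at h
    simpa using h.symm
  | succ j IH =>
    rw [Finset.prod_range_succ, show p+(j+1) = (p+j)+1 by omega, Nat.factorial_succ, ← IH,
      show (p+j)+1 = p+1+j by omega]
    ring

lemma aux_cbNat (j : ℕ) (hp2 : 2 ≤ p) :
    (p+j).choose (p-1) * (j+1).factorial = p * ∏ i ∈ range j, (p+1+i) := by
  have h := Nat.choose_mul_factorial_mul_factorial (show p-1 ≤ p+j by omega)
  rw [show p+j-(p-1) = j+1 by omega] at h
  have hW := aux_W (p := p) j hp2
  apply Nat.eq_of_mul_eq_mul_right (Nat.factorial_pos (p-1))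
  calc (p+j).choose (p-1) * (j+1).factorial * (p-1).factorial
      = (p+j).choose (p-1) * (p-1).factorial * (j+1).factorial := by ring
    _ = (p+j).factorial := h
    _ = p * ((∏ i ∈ range j, (p+1+i)) * (p-1).factorial) := hW.symm
    _ = p * (∏ i ∈ range j, (p+1+i)) * (p-1).factorial := by ring

lemma aux_W_mod (j : ℕ) :
    (p:ℤ_[p]) ∣ ((∏ i ∈ range j, (p+1+i) : ℕ) : ℤ_[p]) - (j.factorial : ℤ_[p]) := by
  rw [aux_pdvd_iff, map_sub, map_natCast, map_natCast]
  push_cast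
  rw [ZMod.natCast_self]
  have : ∀ i ∈ range j, (0:ZMod p) + 1 + (i:ZMod p) = ((i+1 : ℕ) : ZMod p) := by
    intro i _; push_cast; ring
  rw [Finset.prod_congr rfl this, ← Nat.cast_prod, Finset.prod_range_add_one_eq_factorial]
  ring

lemma aux_fact_inv (j : ℕ) (hj : j + 1 ≤ p - 1) :
    (j.factorial : ℤ_[p]) * Ring.inverse ((j+1).factorial : ℤ_[p])
      = Ring.inverse ((j+1 : ℕ) : ℤ_[p]) := by
  have hp := (Fact.out : p.Prime)
  have hp2 : 2 ≤ p := hp.two_le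
  have h1 : ¬ p ∣ (j+1) := fun h => by have := Nat.le_of_dvd (by omega) h; omega
  have h2 : ¬ p ∣ (j+1).factorial := fun h => by
    have := (Nat.Prime.dvd_factorial hp).1 h; omega
  have hc : ((j+1:ℕ) : ℤ_[p]) * (j.factorial : ℤ_[p]) = (((j+1).factorial : ℕ) : ℤ_[p]) := by
    rw [← Nat.cast_mul, Nat.factorial_succ]
  calc (j.factorial : ℤ_[p]) * Ring.inverse ((j+1).factorial : ℤ_[p])
      = (((j+1:ℕ) : ℤ_[p]) * Ring.inverse ((j+1:ℕ) : ℤ_[p]))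
          * ((j.factorial : ℤ_[p]) * Ring.inverse ((j+1).factorial : ℤ_[p])) := by
        rw [aux_mulinv _ h1, one_mul]
    _ = Ring.inverse ((j+1:ℕ) : ℤ_[p])
          * ((((j+1:ℕ) : ℤ_[p]) * (j.factorial : ℤ_[p])) * Ring.inverse ((j+1).factorial : ℤ_[p])) := by
        ring
    _ = Ring.inverse ((j+1:ℕ) : ℤ_[p]) := by
        rw [hc, aux_mulinv _ h2, mul_one]

lemma aux_cb (j : ℕ) (hj : j + 1 ≤ p - 1) :
    (p:ℤ_[p])^2 ∣ (2:ℤ_[p])^p * ((p+j).choose (p-1) : ℤ_[p])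
      - 2*p*Ring.inverse ((j+1 : ℕ) : ℤ_[p]) := by
  have hp := (Fact.out : p.Prime)
  have hp2 : 2 ≤ p := hp.two_le
  have h2 : ¬ p ∣ (j+1).factorial := fun h => by
    have := (Nat.Prime.dvd_factorial hp).1 h; omega
  obtain ⟨E, hE⟩ := aux_fermat (p := p)
  have hE' : (2:ℤ_[p])^p = 2 + p*E := by linear_combination hE
  obtain ⟨D, hD⟩ := aux_W_mod (p := p) j
  have hD' : ((∏ i ∈ range j, (p+1+i) : ℕ) : ℤ_[p]) = (j.factorial : ℤ_[p]) + p*D := by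
    linear_combination hD
  have key : ((p+j).choose (p-1) : ℤ_[p]) * (((j+1).factorial : ℕ) : ℤ_[p])
      = (p:ℤ_[p]) * ((∏ i ∈ range j, (p+1+i) : ℕ) : ℤ_[p]) := by
    rw [← Nat.cast_mul, ← Nat.cast_mul, aux_cbNat j hp2]
  have hbinv := aux_mulinv (p := p) ((j+1).factorial) h2
  have hC : ((p+j).choose (p-1) : ℤ_[p])
      = (p:ℤ_[p]) * ((∏ i ∈ range j, (p+1+i) : ℕ) : ℤ_[p])
          * Ring.inverse (((j+1).factorial : ℕ) : ℤ_[p]) := by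
    calc ((p+j).choose (p-1) : ℤ_[p])
        = ((p+j).choose (p-1) : ℤ_[p]) * ((((j+1).factorial : ℕ) : ℤ_[p])
            * Ring.inverse (((j+1).factorial : ℕ) : ℤ_[p])) := by rw [hbinv, mul_one]
      _ = (((p+j).choose (p-1) : ℤ_[p]) * (((j+1).factorial : ℕ) : ℤ_[p]))
            * Ring.inverse (((j+1).factorial : ℕ) : ℤ_[p]) := by ring
      _ = _ := by rw [key]
  rw [hC, hD', hE', ← aux_fact_inv j hj]
  exact ⟨Ring.inverse (((j+1).factorial : ℕ) : ℤ_[p]) * (2*D + E*(j.factorial : ℤ_[p]) + p*E*D),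
    by push_cast; ring⟩

noncomputable def aT (p : ℕ) [Fact p.Prime] (j : ℕ) : ℤ_[p] :=
  ∑ i ∈ Icc 1 j, (-1)^(j-i) * Ring.inverse ((i:ℕ) : ℤ_[p])

lemma aux_T_succ (j : ℕ) :
    aT p (j+1) = Ring.inverse ((j+1 : ℕ) : ℤ_[p]) - aT p j := by
  unfold aT
  rw [Finset.sum_Icc_succ_top (by omega : 1 ≤ j+1)]
  have h : ∀ i ∈ Icc 1 j, (-1:ℤ_[p])^(j+1-i) * Ring.inverse ((i:ℕ) : ℤ_[p])
      = -((-1)^(j-i) * Ring.inverse ((i:ℕ) : ℤ_[p])) := by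
    intro i hi
    rw [Finset.mem_Icc] at hi
    rw [show j+1-i = (j-i)+1 by omega, pow_succ]
    ring
  rw [Finset.sum_congr rfl h, Finset.sum_neg_distrib,
    show j+1-(j+1) = 0 by omega, pow_zero, one_mul]
  ring

lemma aux_Q : ∀ j : ℕ, j ≤ p - 2 →
    (p:ℤ_[p])^2 ∣ (∑ k ∈ range p, ((j+k).choose k : ℤ_[p]) * 2^k)
      - ((-1)^j * (2^p - 1) + 2*p*aT p j)
  | 0, _ => by
    have hg := congrArg (Nat.cast : ℕ → ℤ_[p]) (aux_geom p)
    push_cast at hg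
    have h0 : aT p 0 = 0 := by unfold aT; simp
    have : (∑ k ∈ range p, ((0+k).choose k : ℤ_[p]) * 2^k)
        - ((-1)^0 * ((2:ℤ_[p])^p - 1) + 2*p*aT p 0) = 0 := by
      rw [h0]
      have he : ∀ k ∈ range p, ((0+k).choose k : ℤ_[p]) * 2^k = 2^k := by
        intro k _; rw [Nat.zero_add, Nat.choose_self]; push_cast; ring
      rw [Finset.sum_congr rfl he]
      linear_combination hg
    rw [this]
    exact dvd_zero _
  | (j+1), hj => by
    have hp := (Fact.out : p.Prime)
    have hp2 : 2 ≤ p := hp.two_le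
    have IH := aux_Q j (by omega)
    have hSS := aux_SS j (p-1)
    rw [show p-1+1 = p by omega, show j+(p-1)+1 = p+j by omega] at hSS
    have hSSR := congrArg (Nat.cast : ℕ → ℤ_[p]) hSS
    push_cast at hSSR
    obtain ⟨a, ha⟩ := aux_cb (p := p) j (by omega)
    obtain ⟨b, hb⟩ := IH
    refine ⟨a - b, ?_⟩
    have hsign : (-1:ℤ_[p])^(j+1) = -(-1)^j := by rw [pow_succ]; ring
    rw [hsign, aux_T_succ j]
    linear_combination hSSR + ha - hb

noncomputable def aHK (p : ℕ) (j : ℕ) : ZMod p := ∑ i ∈ Icc 1 j, ((i:ℕ) : ZMod p)⁻¹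

noncomputable def aAK (p : ℕ) (j : ℕ) : ZMod p :=
  ∑ i ∈ Icc 1 j, (-1)^(i+1) * ((i:ℕ) : ZMod p)⁻¹

lemma aux_Icc_split {M : Type*} [AddCommMonoid M] (f : ℕ → M) (j m : ℕ) (hj : j ≤ m) :
    ∑ i ∈ Icc 1 m, f i = ∑ i ∈ Icc 1 j, f i + ∑ i ∈ Icc (j+1) m, f i := by
  rw [← Finset.sum_union (by
    rw [Finset.disjoint_left]; intro a ha hb
    rw [Finset.mem_Icc] at ha hb; omega)]
  congr 1
  ext a
  simp only [Finset.mem_Icc, Finset.mem_union]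
  omega

lemma aux_reflect {M : Type*} [AddCommMonoid M] (f : ℕ → M) (j : ℕ) (hj : j ≤ p-1) :
    ∑ i ∈ Icc (j+1) (p-1), f i = ∑ l ∈ Icc 1 (p-1-j), f (p - l) := by
  have hp2 : 2 ≤ p := (Fact.out : p.Prime).two_le
  have himg : Finset.image (fun l => p - l) (Icc 1 (p-1-j)) = Icc (j+1) (p-1) := by
    ext a
    simp only [Finset.mem_image, Finset.mem_Icc]
    constructor
    · rintro ⟨l, hl, rfl⟩; omega
    · intro ha; exact ⟨p - a, by omega, by omega⟩
  rw [← himg, Finset.sum_image (by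
    intro x hx y hy hxy
    rw [Finset.mem_coe, Finset.mem_Icc] at hx hy; dsimp only at hxy; omega)]

lemma aux_cast_refl (l : ℕ) (hl : l ≤ p) : ((p - l : ℕ) : ZMod p) = -(l : ZMod p) := by
  rw [Nat.cast_sub hl, ZMod.natCast_self]; ring

lemma aux_sign_refl (hodd : p % 2 = 1) (l : ℕ) (hl : l ≤ p) :
    ((-1 : ZMod p))^(p-l+1) = -(-1 : ZMod p)^(l+1) := by
  have h1 : (p-l+1)+(l+1) = p+2 := by omega
  have h2 : (-1 : ZMod p)^(p-l+1) * (-1)^(l+1) = (-1)^(p+2) := by rw [← pow_add, h1]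
  have h3 : ((-1 : ZMod p))^(p+2) = -1 := Odd.neg_one_pow (by rw [Nat.odd_iff]; omega)
  have h4 : ((-1 : ZMod p))^(l+1) * (-1)^(l+1) = 1 := by
    rw [← pow_add]; exact Even.neg_one_pow ⟨l+1, by ring⟩
  calc (-1 : ZMod p)^(p-l+1)
      = (-1)^(p-l+1) * ((-1)^(l+1) * (-1)^(l+1)) := by rw [h4, mul_one]
    _ = ((-1)^(p-l+1) * (-1)^(l+1)) * (-1)^(l+1) := by ring
    _ = -(-1)^(l+1) := by rw [h2, h3]; ring

lemma aux_tail_H (j : ℕ) (hj : j ≤ p-1) :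
    ∑ i ∈ Icc (j+1) (p-1), ((i:ℕ) : ZMod p)⁻¹ = -aHK p (p-1-j) := by
  rw [aux_reflect _ j hj]
  unfold aHK
  rw [← Finset.sum_neg_distrib]
  apply Finset.sum_congr rfl
  intro l hl
  rw [Finset.mem_Icc] at hl
  rw [aux_cast_refl l (by omega), inv_neg]

lemma aux_tail_A (hodd : p % 2 = 1) (j : ℕ) (hj : j ≤ p-1) :
    ∑ i ∈ Icc (j+1) (p-1), (-1)^(i+1) * ((i:ℕ) : ZMod p)⁻¹ = aAK p (p-1-j) := by
  rw [aux_reflect _ j hj]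
  unfold aAK
  apply Finset.sum_congr rfl
  intro l hl
  rw [Finset.mem_Icc] at hl
  rw [aux_cast_refl l (by omega), inv_neg, aux_sign_refl hodd l (by omega)]
  ring

lemma aux_two_ne (hodd : p % 2 = 1) : (2 : ZMod p) ≠ 0 := by
  have hp := (Fact.out : p.Prime)
  have : ((2:ℕ) : ZMod p) ≠ 0 := by
    rw [Ne, ZMod.natCast_eq_zero_iff]
    intro h
    have := Nat.le_of_dvd (by omega) h
    have h2 := hp.two_le
    interval_cases p <;> omega
  simpa using this

lemma aux_HK_p1 (hodd : p % 2 = 1) : aHK p (p-1) = 0 := by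
  have h := aux_tail_H (p := p) 0 (by omega)
  rw [show p-1-0 = p-1 by omega] at h
  have h2 : aHK p (p-1) = -aHK p (p-1) := by
    rw [← h]; unfold aHK; rfl
  have h3 : (2 : ZMod p) * aHK p (p-1) = 0 := by linear_combination h2
  rcases mul_eq_zero.1 h3 with h4 | h4
  · exact absurd h4 (aux_two_ne hodd)
  · exact h4

lemma aux_HK_refl (hodd : p % 2 = 1) (j : ℕ) (hj : j ≤ p-1) :
    aHK p (p-1-j) = aHK p j := by
  have hs := aux_Icc_split (fun i => ((i:ℕ) : ZMod p)⁻¹) j (p-1) hj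
  have ht := aux_tail_H (p := p) j hj
  have h0 := aux_HK_p1 (p := p) hodd
  have : aHK p (p-1) = aHK p j + ∑ i ∈ Icc (j+1) (p-1), ((i:ℕ) : ZMod p)⁻¹ := hs
  rw [ht, h0] at this
  linear_combination this

lemma aux_AK_refl (hodd : p % 2 = 1) (j : ℕ) (hj : j ≤ p-1) :
    aAK p (p-1) = aAK p j + aAK p (p-1-j) := by
  have hs := aux_Icc_split (fun i => (-1)^(i+1) * ((i:ℕ) : ZMod p)⁻¹) j (p-1) hj
  have ht := aux_tail_A (p := p) hodd j hj
  rw [ht] at hs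
  exact hs

lemma aux_cast_ne (i : ℕ) (h1 : 0 < i) (h2 : i < p) : ((i:ℕ) : ZMod p) ≠ 0 := by
  rw [Ne, ZMod.natCast_eq_zero_iff]
  intro h
  have := Nat.le_of_dvd h1 h
  omega

lemma aux_AK_HH : ∀ j : ℕ, j ≤ p-1 → aAK p j = aHK p j - aHK p (j/2)
  | 0, _ => by unfold aAK aHK; simp
  | (j+1), hj => by
    have IH := aux_AK_HH j (by omega)
    have hA : aAK p (j+1) = aAK p j + (-1)^(j+2) * ((j+1 : ℕ) : ZMod p)⁻¹ := by
      unfold aAK; rw [Finset.sum_Icc_succ_top (by omega : 1 ≤ j+1)]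
    have hH : aHK p (j+1) = aHK p j + ((j+1 : ℕ) : ZMod p)⁻¹ := by
      unfold aHK; rw [Finset.sum_Icc_succ_top (by omega : 1 ≤ j+1)]
    rcases Nat.even_or_odd j with hpar | hpar
    · have he2 : j % 2 = 0 := Nat.even_iff.1 hpar
      have hsgn : ((-1 : ZMod p))^(j+2) = 1 := Even.neg_one_pow (by
        rw [Nat.even_iff] at hpar ⊢; omega)
      have hdiv : (j+1)/2 = j/2 := by omega
      rw [hA, hH, hsgn, hdiv]
      linear_combination IH
    · have ho2 : j % 2 = 1 := Nat.odd_iff.1 hpar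
      have hsgn : ((-1 : ZMod p))^(j+2) = -1 := Odd.neg_one_pow (by
        rw [Nat.odd_iff] at hpar ⊢; omega)
      have hdiv : (j+1)/2 = j/2 + 1 := by omega
      have hH2 : aHK p (j/2+1) = aHK p (j/2) + ((j/2+1 : ℕ) : ZMod p)⁻¹ := by
        unfold aHK; rw [Finset.sum_Icc_succ_top (by omega : 1 ≤ j/2+1)]
      have hb : ((j+1 : ℕ) : ZMod p) = 2 * ((j/2+1 : ℕ) : ZMod p) := by
        have hnn : j+1 = 2*(j/2+1) := by omega
        rw [hnn]; push_cast; ring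
      have hkey : ((j/2+1 : ℕ) : ZMod p)⁻¹ = 2 * ((j+1 : ℕ) : ZMod p)⁻¹ := by
        have hodd' : p % 2 = 1 := by
          have hp := (Fact.out : p.Prime)
          rcases hp.eq_two_or_odd with h2 | h1
          · omega
          · exact h1
        rw [hb, mul_inv, ← mul_assoc, mul_inv_cancel₀ (aux_two_ne hodd'), one_mul]
      rw [hA, hH, hsgn, hdiv, hH2, hkey]
      linear_combination IH

noncomputable def aTalt (p : ℕ) [Fact p.Prime] (j : ℕ) : ℤ_[p] :=
  ∑ i ∈ Icc 1 j, (-1)^(i+1) * Ring.inverse ((i:ℕ) : ℤ_[p])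

lemma aux_not_dvd_mid (i : ℕ) (h1 : 0 < i) (h2 : i ≤ p - 1) : ¬ p ∣ i := by
  have hp2 : 2 ≤ p := (Fact.out : p.Prime).two_le
  intro h
  have := Nat.le_of_dvd h1 h
  omega

lemma aux_pi_Talt (j : ℕ) (hj : j ≤ p-1) :
    PadicInt.toZMod (aTalt p j) = aAK p j := by
  unfold aTalt aAK
  rw [map_sum]
  apply Finset.sum_congr rfl
  intro i hi
  rw [Finset.mem_Icc] at hi
  rw [map_mul, map_pow, map_neg, map_one, aux_pi_inv i (aux_not_dvd_mid i (by omega) (by omega))]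

lemma aux_pi_T (j : ℕ) (hj : j ≤ p-1) :
    PadicInt.toZMod (aT p j) = (-1)^(j+1) * aAK p j := by
  unfold aT aAK
  rw [map_sum, Finset.mul_sum]
  apply Finset.sum_congr rfl
  intro i hi
  rw [Finset.mem_Icc] at hi
  rw [map_mul, map_pow, map_neg, map_one, aux_pi_inv i (aux_not_dvd_mid i (by omega) (by omega))]
  have hsgn : ((-1 : ZMod p))^(j-i) = (-1)^(j+1) * (-1)^(i+1) := by
    rw [← pow_add, show (j+1)+(i+1) = (j-i) + 2*(i+1) by omega, pow_add, pow_mul]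
    norm_num
  rw [hsgn, mul_assoc]

lemma aux_6i (hodd : p % 2 = 1) :
    (p:ℤ_[p])^2 ∣ (p:ℤ_[p]) * aTalt p (p-1) - ((2:ℤ_[p])^p - 2) := by
  have hp := (Fact.out : p.Prime)
  have hp2 : 2 ≤ p := hp.two_le
  -- ℕ identity : 2^p = 1 + (∑_{Icc 1 (p-1)} choose p k) + 1
  have hsplit : 2^p = 1 + (∑ k ∈ Icc 1 (p-1), p.choose k) + 1 := by
    have h0 := Nat.sum_range_choose p
    rw [Finset.sum_range_succ] at h0
    have hr : range p = insert 0 (Icc 1 (p-1)) := by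
      ext a; simp only [Finset.mem_range, Finset.mem_insert, Finset.mem_Icc]; omega
    rw [hr, Finset.sum_insert (by simp)] at h0
    simp only [Nat.choose_zero_right, Nat.choose_self] at h0
    omega
  have hcast : (∑ k ∈ Icc 1 (p-1), (p.choose k : ℤ_[p])) = (2:ℤ_[p])^p - 2 := by
    have := congrArg (Nat.cast : ℕ → ℤ_[p]) hsplit
    push_cast at this
    linear_combination -this
  have hterm : ∀ k ∈ Icc 1 (p-1),
      (p:ℤ_[p])^2 ∣ (p.choose k : ℤ_[p]) - (p:ℤ_[p]) * ((-1)^(k+1) * Ring.inverse ((k:ℕ) : ℤ_[p])) := by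
    intro k hk
    rw [Finset.mem_Icc] at hk
    have hknd : ¬ p ∣ k := aux_not_dvd_mid k (by omega) (by omega)
    have hNat : p * (p-1).choose (k-1) = p.choose k * k := by
      have := Nat.add_one_mul_choose_eq (p-1) (k-1)
      rwa [show p-1+1 = p by omega, show k-1+1 = k by omega] at this
    have hCk : (p.choose k : ℤ_[p]) = (p:ℤ_[p]) * ((p-1).choose (k-1) : ℤ_[p])
        * Ring.inverse ((k:ℕ) : ℤ_[p]) := by
      calc (p.choose k : ℤ_[p])
          = (p.choose k : ℤ_[p]) * (((k:ℕ) : ℤ_[p]) * Ring.inverse ((k:ℕ) : ℤ_[p])) := by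
            rw [aux_mulinv k hknd, mul_one]
        _ = ((p.choose k * k : ℕ) : ℤ_[p]) * Ring.inverse ((k:ℕ) : ℤ_[p]) := by
            push_cast; ring
        _ = ((p * (p-1).choose (k-1) : ℕ) : ℤ_[p]) * Ring.inverse ((k:ℕ) : ℤ_[p]) := by
            rw [hNat]
        _ = _ := by push_cast; ring
    obtain ⟨d, hd⟩ := aux_ch' (p := p) (k-1) (by omega)
    have hd' : ((p-1).choose (k-1) : ℤ_[p]) = (-1)^(k-1) + p * d := by linear_combination hd
    have hsgn : ((-1 : ℤ_[p]))^(k-1) = (-1)^(k+1) := by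
      rw [show k+1 = (k-1) + 2*1 by omega, pow_add, pow_mul]
      norm_num
    rw [hCk, hd', hsgn]
    exact ⟨d * Ring.inverse ((k:ℕ) : ℤ_[p]), by ring⟩
  have hsum : (p:ℤ_[p])^2 ∣ (∑ k ∈ Icc 1 (p-1), (p.choose k : ℤ_[p]))
      - (p:ℤ_[p]) * aTalt p (p-1) := by
    unfold aTalt
    rw [Finset.mul_sum, ← Finset.sum_sub_distrib]
    exact Finset.dvd_sum hterm
  have := dvd_neg.2 hsum
  rw [hcast] at this
  convert this using 1
  ring

noncomputable def aF (p : ℕ) [Fact p.Prime] : Polynomial ℤ_[p] :=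
  ∑ k ∈ range p, Polynomial.C (Ring.inverse (k.factorial : ℤ_[p]) * 2^k) * ascPochhammer ℤ_[p] k

lemma aux_fact_ndvd (k : ℕ) (hk : k < p) : ¬ p ∣ k.factorial := by
  intro h
  have := (Nat.Prime.dvd_factorial (Fact.out : p.Prime)).1 h
  omega

lemma aux_F_eval (x : ℤ_[p]) :
    (aF p).eval x = ∑ k ∈ range p,
      (ascPochhammer ℤ_[p] k).eval x * (Ring.inverse (k.factorial : ℤ_[p]) * 2^k) := by
  unfold aF
  rw [Polynomial.eval_finset_sum]
  apply Finset.sum_congr rfl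
  intro k _
  rw [eval_mul, eval_C]
  ring

lemma aux_F_eval_neg (n : ℕ) (hn : n < p) : (aF p).eval (-(n:ℤ_[p])) = (-1)^n := by
  rw [aux_F_eval]
  exact aux_sum_poch_neg p n hn _ (fun k hk => aux_mulinv _ (aux_fact_ndvd k (by omega)))

lemma aux_F_eval_nat (n : ℕ) :
    (aF p).eval (((n+1 : ℕ)) : ℤ_[p]) = ∑ k ∈ range p, ((n+k).choose k : ℤ_[p]) * 2^k := by
  rw [aux_F_eval]
  apply Finset.sum_congr rfl
  intro k hk
  rw [Finset.mem_range] at hk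
  have h1 : (ascPochhammer ℤ_[p] k).eval (((n+1:ℕ)) : ℤ_[p])
      = (((n+1).ascFactorial k : ℕ) : ℤ_[p]) := by
    rw [← ascPochhammer_eval_cast, ascPochhammer_nat_eq_ascFactorial]
  rw [h1, Nat.ascFactorial_eq_factorial_mul_choose]
  have hb := aux_mulinv (p := p) (k.factorial) (aux_fact_ndvd k hk)
  push_cast
  linear_combination (((n+k).choose k : ℤ_[p]) * 2^k) * hb

lemma aux_F_deg : (aF p).natDegree < p := by
  have hp1 : 1 ≤ p := (Fact.out : p.Prime).one_lt.le
  have h : (aF p).natDegree ≤ p - 1 := by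
    unfold aF
    apply Polynomial.natDegree_sum_le_of_forall_le
    intro k hk
    rw [Finset.mem_range] at hk
    refine le_trans (Polynomial.natDegree_C_mul_le _ _) ?_
    rw [ascPochhammer_natDegree]
    omega
  omega

noncomputable def aG (p : ℕ) [Fact p.Prime] : Polynomial ℤ_[p] :=
  aF p - (aF p).comp (1 - Polynomial.X)

lemma aux_G_eval (x : ℤ_[p]) : (aG p).eval x = (aF p).eval x - (aF p).eval (1 - x) := by
  unfold aG
  rw [eval_sub, eval_comp, eval_sub, eval_one, eval_X]

lemma aux_Fbar_eval_neg' (m : ℕ) (hm : m < p) :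
    ((aF p).map PadicInt.toZMod).eval (-(m : ZMod p)) = (-1)^m := by
  have hform : ∀ t : ZMod p, ((aF p).map PadicInt.toZMod).eval t
      = ∑ k ∈ range p, (ascPochhammer (ZMod p) k).eval t
          * (((k.factorial : ZMod p))⁻¹ * 2^k) := by
    intro t
    unfold aF
    rw [Polynomial.map_sum, Polynomial.eval_finset_sum]
    apply Finset.sum_congr rfl
    intro k hk
    rw [Finset.mem_range] at hk
    rw [Polynomial.map_mul, Polynomial.map_C, ascPochhammer_map, eval_mul, eval_C,
      map_mul, map_pow, aux_pi_inv _ (aux_fact_ndvd k hk)]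
    have h2 : PadicInt.toZMod (2 : ℤ_[p]) = (2 : ZMod p) := by
      rw [show (2:ℤ_[p]) = ((2:ℕ):ℤ_[p]) by norm_num, map_natCast]; norm_num
    rw [h2]
    ring
  rw [hform]
  apply aux_sum_poch_neg p m hm
  intro k hk
  apply mul_inv_cancel₀
  have := aux_fact_ndvd (p := p) k (by omega)
  rw [Ne, ZMod.natCast_eq_zero_iff]
  exact this

lemma aux_G_map_zero (hodd : p % 2 = 1) : (aG p).map PadicInt.toZMod = 0 := by
  have hp2 : 2 ≤ p := (Fact.out : p.Prime).two_le
  apply Polynomial.eq_zero_of_natDegree_lt_card_of_eval_eq_zero' _ Finset.univ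
  · intro t _
    obtain ⟨m, hmp, h1⟩ : ∃ m, m < p ∧ ((m:ℕ) : ZMod p) = -t :=
      ⟨(-t).val, ZMod.val_lt _, by rw [ZMod.natCast_val, ZMod.cast_id]⟩
    obtain ⟨m', hmp', h1'⟩ : ∃ m', m' < p ∧ ((m':ℕ) : ZMod p) = -(1-t) :=
      ⟨(-(1-t)).val, ZMod.val_lt _, by rw [ZMod.natCast_val, ZMod.cast_id]⟩
    have ht : t = -((m:ℕ) : ZMod p) := by rw [h1]; ring
    have ht' : 1-t = -((m':ℕ) : ZMod p) := by rw [h1']; ring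
    unfold aG
    rw [Polynomial.map_sub, Polynomial.map_comp, Polynomial.map_sub, Polynomial.map_one,
      Polynomial.map_X, eval_sub, eval_comp, eval_sub, eval_one, eval_X]
    rw [show ((aF p).map PadicInt.toZMod).eval t = (-1)^m from by
        rw [ht, aux_Fbar_eval_neg' m hmp],
      show ((aF p).map PadicInt.toZMod).eval (1-t) = (-1)^m' from by
        rw [ht', aux_Fbar_eval_neg' m' hmp']]
    have hsum : ((m + m' : ℕ) : ZMod p) = ((p - 1 : ℕ) : ZMod p) := by
      push_cast
      rw [h1, h1', Nat.cast_sub (by omega : 1 ≤ p), ZMod.natCast_self]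
      ring
    have hmod : (m + m') % p = (p - 1) % p := (ZMod.natCast_eq_natCast_iff _ _ _).1 hsum
    have hmm' : m' = p - 1 - m := by
      rcases Nat.lt_or_ge (m + m') p with hlt | hge
      · rw [Nat.mod_eq_of_lt hlt, Nat.mod_eq_of_lt (by omega)] at hmod; omega
      · rw [Nat.mod_eq_sub_mod hge, Nat.mod_eq_of_lt (by omega),
          Nat.mod_eq_of_lt (by omega)] at hmod
        omega
    have heq : ((-1 : ZMod p))^(p-1-m) = (-1)^m := by
      calc ((-1 : ZMod p))^(p-1-m)
          = (-1)^(p-1-m) * ((-1)^m * (-1)^m) := by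
            rw [← pow_add, show m+m = 2*m by ring, pow_mul]; norm_num
        _ = ((-1)^((p-1-m)+m)) * (-1)^m := by rw [pow_add]; ring
        _ = (-1)^m := by
            rw [show (p-1-m)+m = p-1 by omega,
              show ((-1 : ZMod p))^(p-1) = 1 from Even.neg_one_pow (by
                rw [Nat.even_iff]; omega), one_mul]
    rw [hmm', heq, sub_self]
  · have hdeg : ((aG p).map PadicInt.toZMod).natDegree < p := by
      refine lt_of_le_of_lt (Polynomial.natDegree_map_le) ?_
      unfold aG
      refine lt_of_le_of_lt (Polynomial.natDegree_sub_le _ _) ?_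
      rw [max_lt_iff]
      constructor
      · exact aux_F_deg
      · refine lt_of_le_of_lt (Polynomial.natDegree_comp_le) ?_
        have h1X : (1 - Polynomial.X : Polynomial ℤ_[p]).natDegree ≤ 1 := by
          refine le_trans (Polynomial.natDegree_sub_le _ _) ?_
          simp
        calc (aF p).natDegree * (1 - Polynomial.X : Polynomial ℤ_[p]).natDegree
            ≤ (aF p).natDegree * 1 := Nat.mul_le_mul_left _ h1X
          _ < p := by rw [Nat.mul_one]; exact aux_F_deg
    rwa [Finset.card_univ, ZMod.card]

lemma aux_G_transfer (hodd : p % 2 = 1) (c : ℕ)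
    (hcu : (p:ℤ_[p]) ∣ ((c:ℕ) : ℤ_[p]) - Ring.inverse (3 : ℤ_[p])) :
    (p:ℤ_[p])^2 ∣ (aG p).eval (Ring.inverse (3:ℤ_[p])) - (aG p).eval ((c:ℕ) : ℤ_[p]) := by
  rw [Polynomial.eval_eq_sum_range (p := aG p) (Ring.inverse (3:ℤ_[p])),
    Polynomial.eval_eq_sum_range (p := aG p) ((c:ℕ) : ℤ_[p]),
    ← Finset.sum_sub_distrib]
  apply Finset.dvd_sum
  intro i _
  rw [← mul_sub, sq]
  apply mul_dvd_mul
  · rw [aux_pdvd_iff]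
    have h2 := congrArg (fun q => Polynomial.coeff q i) (aux_G_map_zero (p := p) hodd)
    simpa [Polynomial.coeff_map] using h2
  · have h3 : (p:ℤ_[p]) ∣ Ring.inverse (3:ℤ_[p]) - ((c:ℕ) : ℤ_[p]) := by
      have := dvd_neg.2 hcu
      rwa [neg_sub] at this
    exact h3.trans (sub_dvd_pow_sub_pow _ _ i)

lemma aux_core (hodd : p % 2 = 1) (n : ℕ) (hn : n ≤ p - 2)
    (hcu : (p:ℤ_[p]) ∣ (((n+1 : ℕ)) : ℤ_[p]) - Ring.inverse (3 : ℤ_[p]))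
    (hfin : (p:ℤ_[p])^2 ∣ ((-1:ℤ_[p])^n * (2^p - 1) + 2*p*aT p n)
      - (-1)^n - ((2:ℤ_[p])^p - 2)) :
    (p:ℤ_[p])^2 ∣ (aG p).eval (Ring.inverse (3:ℤ_[p])) - ((2:ℤ_[p])^p - 2) := by
  have hp2 : 2 ≤ p := (Fact.out : p.Prime).two_le
  have htrans := aux_G_transfer hodd (n+1) hcu
  have hGc : (aG p).eval (((n+1:ℕ)) : ℤ_[p])
      = (∑ k ∈ range p, ((n+k).choose k : ℤ_[p]) * 2^k) - (-1)^n := by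
    rw [aux_G_eval, aux_F_eval_nat n]
    congr 1
    have h1 : (1:ℤ_[p]) - ((n+1:ℕ) : ℤ_[p]) = -((n:ℕ) : ℤ_[p]) := by push_cast; ring
    rw [h1, aux_F_eval_neg n (by omega)]
  have hQ := aux_Q n hn
  obtain ⟨a, ha⟩ := htrans
  obtain ⟨b, hb⟩ := hQ
  obtain ⟨e, he⟩ := hfin
  exact ⟨a + b + e, by linear_combination ha + hGc + hb + he⟩

theorem oneF_zero_third_diff (p : ℕ) [Fact p.Prime] (hp3 : 3 < p) :
    (p : ℤ_[p]) ^ 2 ∣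
      (∑ k ∈ Finset.range p,
          (ascPochhammer ℤ_[p] k).eval (Ring.inverse (3 : ℤ_[p])) *
            Ring.inverse ((k.factorial : ℤ_[p])) * 2 ^ k)
        - (∑ k ∈ Finset.range p,
            (ascPochhammer ℤ_[p] k).eval (2 * Ring.inverse (3 : ℤ_[p])) *
              Ring.inverse ((k.factorial : ℤ_[p])) * 2 ^ k)
        - (2 ^ p - 2) := by
  have hp := (Fact.out : p.Prime)
  have hp2 : 2 ≤ p := hp.two_le
  have hodd : p % 2 = 1 := by
    rcases hp.eq_two_or_odd with h | h
    · omega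
    · exact h
  have hnd3 : ¬ p ∣ 3 := fun h => by have := Nat.le_of_dvd (by omega) h; omega
  have h3u : ((3:ℕ) : ℤ_[p]) * Ring.inverse ((3:ℕ) : ℤ_[p]) = 1 := aux_mulinv 3 hnd3
  have hcast3 : ((3:ℕ) : ℤ_[p]) = (3 : ℤ_[p]) := by norm_num
  rw [hcast3] at h3u
  have h2u : 2 * Ring.inverse (3:ℤ_[p]) = 1 - Ring.inverse (3:ℤ_[p]) := by
    linear_combination h3u
  have hS1 : (∑ k ∈ Finset.range p,
      (ascPochhammer ℤ_[p] k).eval (Ring.inverse (3 : ℤ_[p])) *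
        Ring.inverse ((k.factorial : ℤ_[p])) * 2 ^ k)
      = (aF p).eval (Ring.inverse (3:ℤ_[p])) := by
    rw [aux_F_eval]
    apply Finset.sum_congr rfl
    intro k _; ring
  have hS2 : (∑ k ∈ Finset.range p,
      (ascPochhammer ℤ_[p] k).eval (2 * Ring.inverse (3 : ℤ_[p])) *
        Ring.inverse ((k.factorial : ℤ_[p])) * 2 ^ k)
      = (aF p).eval (1 - Ring.inverse (3:ℤ_[p])) := by
    rw [← h2u, aux_F_eval]
    apply Finset.sum_congr rfl
    intro k _; ring
  rw [hS1, hS2, show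
    (aF p).eval (Ring.inverse (3:ℤ_[p])) - (aF p).eval (1 - Ring.inverse (3:ℤ_[p]))
      = (aG p).eval (Ring.inverse (3:ℤ_[p])) from (aux_G_eval _).symm]
  -- cases on p % 3
  have hnd3' : ¬ (3 ∣ p) := by
    intro h
    rcases (Nat.Prime.eq_one_or_self_of_dvd hp 3 h) with h' | h' <;> omega
  -- helper for hcu
  have hcu_gen : ∀ c : ℕ, ((3*c) % p = 1 % p) →
      (p:ℤ_[p]) ∣ ((c:ℕ) : ℤ_[p]) - Ring.inverse (3 : ℤ_[p]) := by
    intro c hc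
    rw [aux_pdvd_iff, map_sub, map_natCast, show (3:ℤ_[p]) = ((3:ℕ):ℤ_[p]) from by norm_num,
      aux_pi_inv 3 hnd3]
    have h3c : ((3:ℕ) : ZMod p) * ((c:ℕ) : ZMod p) = 1 := by
      have := (ZMod.natCast_eq_natCast_iff (3*c) 1 p).2 hc
      push_cast at this
      push_cast
      linear_combination this
    rw [← eq_inv_of_mul_eq_one_right h3c]
    ring
  rcases Nat.lt_or_ge (p % 3) 2 with h31 | h32
  · -- p % 3 = 1 case
    have hmod3 : p % 3 = 1 := by
      rcases Nat.lt_or_ge (p % 3) 1 with h' | h'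
      · exfalso; exact hnd3' (Nat.dvd_of_mod_eq_zero (by omega))
      · omega
    set t := p / 3 with htdef
    have hpt : p = 3*t + 1 := by omega
    have ht2 : 2 ≤ t := by omega
    apply aux_core hodd (2*t) (by omega)
    · apply hcu_gen
      rw [show 3*(2*t+1) = 1 + 2*p by omega, Nat.add_mul_mod_self_right]
    · -- n = 2t even
      have hsgn : ((-1 : ℤ_[p]))^(2*t) = 1 := by rw [pow_mul]; norm_num
      have hTd : (p:ℤ_[p]) ∣ aT p (2*t) := by
        rw [aux_pdvd_iff, aux_pi_T (2*t) (by omega)]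
        have hAK : aAK p (2*t) = 0 := by
          rw [aux_AK_HH (2*t) (by omega), show (2*t)/2 = t by omega]
          have := aux_HK_refl (p := p) hodd (2*t) (by omega)
          rw [show p-1-2*t = t by omega] at this
          rw [← this]
          ring
        rw [hAK]; ring
      obtain ⟨w, hw⟩ := hTd
      rw [hsgn]
      exact ⟨2*w, by linear_combination (2*(p:ℤ_[p]))*hw⟩
  · -- p % 3 = 2 case
    have hmod3 : p % 3 = 2 := by omega
    set t := p / 3 with htdef
    have hpt : p = 3*t + 2 := by omega
    have ht1 : 1 ≤ t := by omega
    have htodd : t % 2 = 1 := by omega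
    apply aux_core hodd t (by omega)
    · apply hcu_gen
      rw [show 3*(t+1) = 1 + 1*p by omega, Nat.add_mul_mod_self_right]
    · have hsgn : ((-1 : ℤ_[p]))^t = -1 := Odd.neg_one_pow (by rw [Nat.odd_iff]; exact htodd)
      -- p ∣ aT p t - aTalt p (p-1)
      have hTd : (p:ℤ_[p]) ∣ aT p t - aTalt p (p-1) := by
        rw [aux_pdvd_iff, map_sub, aux_pi_T t (by omega), aux_pi_Talt (p-1) (by omega)]
        have hsgn2 : ((-1 : ZMod p))^(t+1) = 1 := Even.neg_one_pow (by
          rw [Nat.even_iff]; omega)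
        have hArefl := aux_AK_refl (p := p) hodd t (by omega)
        have hA0 : aAK p (p-1-t) = 0 := by
          rw [show p-1-t = 2*t+1 by omega]
          rw [aux_AK_HH (2*t+1) (by omega), show (2*t+1)/2 = t by omega]
          have := aux_HK_refl (p := p) hodd (2*t+1) (by omega)
          rw [show p-1-(2*t+1) = t by omega] at this
          rw [← this]
          ring
        rw [hA0] at hArefl
        rw [hsgn2, hArefl]
        ring
      obtain ⟨w, hw⟩ := hTd
      obtain ⟨v, hv⟩ := aux_6i (p := p) hodd
      rw [hsgn]
      exact ⟨2*w + 2*v, by linear_combination (2*(p:ℤ_[p]))*hw + 2*hv⟩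
end

section
/- For every nonnegative integer n: ∑_{k=0}^{n} (10n−k+8)·(−n)_k(−1/2−n)_k/[(1)_k(−4n−2)_k] · (8/9)^k = 2·Γ(1/2)·Γ(3n+3)/(9^n·Γ(2n+3/2)·Γ(n+1)), i.e. the right side equals 2·(3n+2)!·Γ(1/2)/(9^n·n!·Γ(2n+3/2)). -/
open Polynomial Finset

/-- The summand. -/
noncomputable def wzT (n k : ℕ) : ℝ :=
  ((10 * n : ℝ) - k + 8) *
    ((ascPochhammer ℝ k).eval (-(n : ℝ)) * (ascPochhammer ℝ k).eval (-1 / 2 - (n : ℝ))) /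
    ((ascPochhammer ℝ k).eval 1 * (ascPochhammer ℝ k).eval (-(4 * n : ℝ) - 2)) *
    (8 / 9 : ℝ) ^ k

noncomputable def wzZ (n : ℕ) : ℝ := (ascPochhammer ℝ (2 * n)).eval (3 / 2 : ℝ)

/-- Closed form of the sum. -/
noncomputable def wzR (n : ℕ) : ℝ :=
  4 * (Nat.factorial (3 * n + 2)) / (9 ^ n * wzZ n * Nat.factorial n)

/-- WZ certificate polynomial. -/
noncomputable def wzP (n k : ℝ) : ℝ :=
  960*n^4 + 4944*n^3 + 9248*n^2 + 7440*n + 2160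
    + k * (-816*n^3 - 3384*n^2 - 4414*n - 1824)
    + k^2 * (72*n^2 + 360*n + 323) + k^3 * (30*n + 24) - 3*k^4

/-- WZ companion function. -/
noncomputable def wzG (n : ℕ) : ℕ → ℝ
  | 0 => 0
  | (j+1) =>
      -9 * (j+1 : ℝ) * wzP n (j+1)
        * (ascPochhammer ℝ j).eval (-(n : ℝ)) * (ascPochhammer ℝ j).eval (-1/2 - (n : ℝ))
        * (8/9 : ℝ) ^ (j+1)
      / (64 * (3*(n:ℝ)+4) * (3*(n:ℝ)+5) * (ascPochhammer ℝ (j+1)).eval 1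
          * (ascPochhammer ℝ (j+1)).eval (-(4*n : ℝ) - 2) * wzR n)

lemma aP_succ_left_eval (m : ℕ) (x : ℝ) :
    (ascPochhammer ℝ (m+1)).eval x = x * (ascPochhammer ℝ m).eval (x + 1) := by
  rw [ascPochhammer_succ_left]
  simp [eval_comp]

lemma aP_shift4 (m : ℕ) (x : ℝ) :
    (ascPochhammer ℝ m).eval (x + 4) * (x * (x+1) * (x+2) * (x+3))
      = (ascPochhammer ℝ m).eval x * ((x+m) * (x+m+1) * (x+m+2) * (x+m+3)) := by
  induction m with
  | zero => simp only [ascPochhammer_zero, Polynomial.eval_one, Nat.cast_zero]; ring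
  | succ m ih =>
      rw [ascPochhammer_succ_eval, ascPochhammer_succ_eval]
      push_cast
      linear_combination (x + (m:ℝ) + 4) * ih

lemma aP_eval_one_pos (k : ℕ) : 0 < (ascPochhammer ℝ k).eval (1:ℝ) :=
  ascPochhammer_pos k 1 one_pos

lemma aP_neg_ne {k : ℕ} (m : ℕ) (h : k ≤ m) :
    (ascPochhammer ℝ k).eval (-(m : ℝ)) ≠ 0 := by
  rw [Ne, ascPochhammer_eval_eq_zero_iff]
  rintro ⟨j, hj, hjm⟩
  rw [neg_neg] at hjm
  have : j = m := by exact_mod_cast hjm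
  omega

lemma aP_D_ne (n k : ℕ) (h : k ≤ 4*n + 2) :
    (ascPochhammer ℝ k).eval (-(4*n : ℝ) - 2) ≠ 0 := by
  have : (-(4*n : ℝ) - 2) = -((4*n+2 : ℕ) : ℝ) := by push_cast; ring
  rw [this]
  exact aP_neg_ne (4*n+2) h

lemma wzZ_pos (n : ℕ) : 0 < wzZ n := ascPochhammer_pos _ _ (by norm_num)

lemma wzR_pos (n : ℕ) : 0 < wzR n := by
  unfold wzR
  have := wzZ_pos n
  have h9 : (0:ℝ) < 9 ^ n := by positivity
  have h2 : (0:ℝ) < (Nat.factorial (3 * n + 2) : ℝ) := by exact_mod_cast Nat.factorial_pos _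
  have h3 : (0:ℝ) < (Nat.factorial n : ℝ) := by exact_mod_cast Nat.factorial_pos _
  positivity

lemma wzR_ne (n : ℕ) : wzR n ≠ 0 := (wzR_pos n).ne'

lemma wzR_succ (n : ℕ) :
    wzR (n+1) = wzR n * ((3*(n:ℝ)+3) * (3*(n:ℝ)+4) * (3*(n:ℝ)+5))
      / (9 * (2*(n:ℝ)+3/2) * (2*(n:ℝ)+5/2) * ((n:ℝ)+1)) := by
  have hz : wzZ (n+1) = wzZ n * ((3/2 + 2*(n:ℝ)) * (3/2 + 2*(n:ℝ) + 1)) := by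
    unfold wzZ
    have : 2 * (n+1) = (2*n) + 1 + 1 := by ring
    rw [this, ascPochhammer_succ_eval, ascPochhammer_succ_eval]
    push_cast; ring
  have hf : ((Nat.factorial (3*(n+1)+2)) : ℝ)
      = ((3*(n:ℝ)+3) * (3*(n:ℝ)+4) * (3*(n:ℝ)+5)) * (Nat.factorial (3*n+2)) := by
    have : 3*(n+1)+2 = (3*n+2) + 1 + 1 + 1 := by ring
    rw [this, Nat.factorial_succ, Nat.factorial_succ, Nat.factorial_succ]
    push_cast; ring
  have hfn : ((Nat.factorial (n+1)) : ℝ) = ((n:ℝ)+1) * (Nat.factorial n) := by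
    rw [Nat.factorial_succ]; push_cast; ring
  unfold wzR
  rw [hz, hf, hfn, pow_succ]
  have hzne : wzZ n ≠ 0 := (wzZ_pos n).ne'
  have h9 : (9:ℝ) ^ n ≠ 0 := by positivity
  have h3 : ((Nat.factorial n : ℝ)) ≠ 0 := by
    exact_mod_cast (Nat.factorial_pos n).ne'
  have hA : (3/2 + 2*(n:ℝ)) ≠ 0 := by positivity
  have hB : (3/2 + 2*(n:ℝ) + 1) ≠ 0 := by positivity
  have hC : ((n:ℝ)+1) ≠ 0 := by positivity
  field_simp
  ring

set_option maxHeartbeats 1000000 in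
/-- Scalar (two-variable) form of the WZ identity. -/
lemma wz_scalar (n k : ℝ)
    (hk : k ≠ 0) (hk1 : k + 1 ≠ 0)
    (h1 : n + 1 ≠ 0) (h2 : 2*n+3/2 ≠ 0) (h3 : 2*n+5/2 ≠ 0)
    (h0 : 3*n+3 ≠ 0) (h4 : 3*n+4 ≠ 0) (h5 : 3*n+5 ≠ 0)
    (h6 : k-4*n-6 ≠ 0) (h7 : k-4*n-5 ≠ 0) (h8 : k-4*n-4 ≠ 0) (h9 : k-4*n-3 ≠ 0)
    (h10 : k-4*n-2 ≠ 0)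
    (w6 : -4*n-6 ≠ 0) (w7 : -4*n-5 ≠ 0) (w8 : -4*n-4 ≠ 0) (w9 : -4*n-3 ≠ 0) :
    (10*n+18-k) * ((n+1)*(n+3/2)) * (9*(2*n+3/2)*(2*n+5/2)*(n+1))
        * ((k-4*n-6)*(k-4*n-5)*(k-4*n-4)*(k-4*n-3))
        / (((-4*n-6)*(-4*n-5)*(-4*n-4)*(-4*n-3)) * ((3*n+3)*(3*n+4)*(3*n+5)))
      - (10*n+8-k) * (k-1-n) * (k-3/2-n)
      = -8*(k+1) * wzP n (k+1) * (k-1-n) * (k-3/2-n)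
          / (64*(3*n+4)*(3*n+5)*(k+1)*(k-4*n-2))
        - (-9)*k * wzP n k / (64*(3*n+4)*(3*n+5)) := by
  have hX : ((-4*n-6)*(-4*n-5)*(-4*n-4)*(-4*n-3)) * ((3*n+3)*(3*n+4)*(3*n+5)) ≠ 0 := by
    exact mul_ne_zero (mul_ne_zero (mul_ne_zero (mul_ne_zero w6 w7) w8) w9)
      (mul_ne_zero (mul_ne_zero h0 h4) h5)
  have hY : (64*(3*n+4)*(3*n+5)*(k+1)*(k-4*n-2)) ≠ 0 := by
    exact mul_ne_zero (mul_ne_zero (mul_ne_zero (mul_ne_zero (by norm_num) h4) h5) hk1) h10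
  have hF : (64*(3*n+4)*(3*n+5)) ≠ 0 := mul_ne_zero (mul_ne_zero (by norm_num) h4) h5
  rw [show ∀ A B : ℝ, A / (((-4*n-6)*(-4*n-5)*(-4*n-4)*(-4*n-3)) * ((3*n+3)*(3*n+4)*(3*n+5))) - B
      = (A - B * (((-4*n-6)*(-4*n-5)*(-4*n-4)*(-4*n-3)) * ((3*n+3)*(3*n+4)*(3*n+5))))
        / (((-4*n-6)*(-4*n-5)*(-4*n-4)*(-4*n-3)) * ((3*n+3)*(3*n+4)*(3*n+5)))
      from fun A B => by rw [sub_div, mul_div_cancel_right₀ _ hX],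
    div_sub_div _ _ hY hF, div_eq_div_iff hX (mul_ne_zero hY hF)]
  unfold wzP
  ring

set_option maxHeartbeats 1000000 in
/-- The generic algebraic WZ identity. -/
lemma wz_algebra (n k a b c D r q : ℝ)
    (hc : c ≠ 0) (hD : D ≠ 0) (hr : r ≠ 0) (hk : k ≠ 0) (hk1 : k + 1 ≠ 0)
    (h1 : n + 1 ≠ 0) (h2 : 2*n+3/2 ≠ 0) (h3 : 2*n+5/2 ≠ 0)
    (h0 : 3*n+3 ≠ 0) (h4 : 3*n+4 ≠ 0) (h5 : 3*n+5 ≠ 0)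
    (h6 : k-4*n-6 ≠ 0) (h7 : k-4*n-5 ≠ 0) (h8 : k-4*n-4 ≠ 0) (h9 : k-4*n-3 ≠ 0)
    (h10 : k-4*n-2 ≠ 0)
    (w6 : -4*n-6 ≠ 0) (w7 : -4*n-5 ≠ 0) (w8 : -4*n-4 ≠ 0) (w9 : -4*n-3 ≠ 0) :
    (10*n+18-k) * ((-(n+1)*a) * (-(n+3/2)*b))
        / ((k*c) * (D * ((-4*n-6)*(-4*n-5)*(-4*n-4)*(-4*n-3))
            / ((k-4*n-6)*(k-4*n-5)*(k-4*n-4)*(k-4*n-3)))) * q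
        / (r * ((3*n+3)*(3*n+4)*(3*n+5)) / (9 * (2*n+3/2) * (2*n+5/2) * (n+1)))
      - (10*n+8-k) * ((a*(k-1-n)) * (b*(k-3/2-n))) / ((k*c) * D) * q / r
      = (-9*(k+1) * wzP n (k+1) * (a*(k-1-n)) * (b*(k-3/2-n)) * (8/9*q))
          / (64*(3*n+4)*(3*n+5) * ((k+1)*(k*c)) * (D*(k-4*n-2)) * r)
        - (-9*k * wzP n k * a * b * q) / (64*(3*n+4)*(3*n+5) * (k*c) * D * r) := by
  have X := a * b * q / (k * c * D * r)
  have e1 : (10*n+18-k) * ((-(n+1)*a) * (-(n+3/2)*b))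
        / ((k*c) * (D * ((-4*n-6)*(-4*n-5)*(-4*n-4)*(-4*n-3))
            / ((k-4*n-6)*(k-4*n-5)*(k-4*n-4)*(k-4*n-3)))) * q
        / (r * ((3*n+3)*(3*n+4)*(3*n+5)) / (9 * (2*n+3/2) * (2*n+5/2) * (n+1)))
      = ((10*n+18-k) * ((n+1)*(n+3/2)) * (9*(2*n+3/2)*(2*n+5/2)*(n+1))
        * ((k-4*n-6)*(k-4*n-5)*(k-4*n-4)*(k-4*n-3))
        / (((-4*n-6)*(-4*n-5)*(-4*n-4)*(-4*n-3)) * ((3*n+3)*(3*n+4)*(3*n+5))))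
        * (a * b * q / (k * c * D * r)) := by
    simp only [div_eq_mul_inv, mul_inv, inv_inv]
    ring
  have e2 : (10*n+8-k) * ((a*(k-1-n)) * (b*(k-3/2-n))) / ((k*c) * D) * q / r
      = ((10*n+8-k) * (k-1-n) * (k-3/2-n)) * (a * b * q / (k * c * D * r)) := by
    field_simp
  have e3 : (-9*(k+1) * wzP n (k+1) * (a*(k-1-n)) * (b*(k-3/2-n)) * (8/9*q))
          / (64*(3*n+4)*(3*n+5) * ((k+1)*(k*c)) * (D*(k-4*n-2)) * r)
      = (-8*(k+1) * wzP n (k+1) * (k-1-n) * (k-3/2-n)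
          / (64*(3*n+4)*(3*n+5)*(k+1)*(k-4*n-2))) * (a * b * q / (k * c * D * r)) := by
    simp only [div_eq_mul_inv, mul_inv, inv_inv]
    ring
  have e4 : (-9*k * wzP n k * a * b * q) / (64*(3*n+4)*(3*n+5) * (k*c) * D * r)
      = ((-9)*k * wzP n k / (64*(3*n+4)*(3*n+5))) * (a * b * q / (k * c * D * r)) := by
    simp only [div_eq_mul_inv, mul_inv, inv_inv]
    ring
  rw [e1, e2, e3, e4, ← sub_mul, ← sub_mul,
    wz_scalar n k hk hk1 h1 h2 h3 h0 h4 h5 h6 h7 h8 h9 h10 w6 w7 w8 w9]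

set_option maxHeartbeats 3000000 in
lemma wz_step_succ (n j : ℕ) (hj : j ≤ n) :
    wzT (n+1) (j+1) / wzR (n+1) - wzT n (j+1) / wzR n = wzG n (j+2) - wzG n (j+1) := by
  have hjN : (j:ℝ) ≤ (n:ℝ) := by exact_mod_cast hj
  have hN : (0:ℝ) ≤ (n:ℝ) := Nat.cast_nonneg n
  have hc : (ascPochhammer ℝ j).eval (1:ℝ) ≠ 0 := (aP_eval_one_pos j).ne'
  have hD : (ascPochhammer ℝ (j+1)).eval (-(4*(n:ℝ)) - 2) ≠ 0 := by
    have := aP_D_ne n (j+1) (by omega)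
    simpa [mul_comm] using this
  have hr : wzR n ≠ 0 := wzR_ne n
  -- rewrite all pochhammer evaluations
  have hA : (ascPochhammer ℝ (j+1)).eval (-(n:ℝ))
      = (ascPochhammer ℝ j).eval (-(n:ℝ)) * (((j:ℝ)+1) - 1 - (n:ℝ)) := by
    rw [ascPochhammer_succ_eval]; ring
  have hB : (ascPochhammer ℝ (j+1)).eval (-1/2 - (n:ℝ))
      = (ascPochhammer ℝ j).eval (-1/2 - (n:ℝ)) * (((j:ℝ)+1) - 3/2 - (n:ℝ)) := by
    rw [ascPochhammer_succ_eval]; ring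
  have hC : (ascPochhammer ℝ (j+1)).eval (1:ℝ)
      = ((j:ℝ)+1) * (ascPochhammer ℝ j).eval (1:ℝ) := by
    rw [ascPochhammer_succ_eval]; ring
  have hA' : (ascPochhammer ℝ (j+1)).eval (-((n:ℝ)+1))
      = -((n:ℝ)+1) * (ascPochhammer ℝ j).eval (-(n:ℝ)) := by
    rw [aP_succ_left_eval, show (-((n:ℝ)+1) + 1) = -(n:ℝ) by ring]
  have hB' : (ascPochhammer ℝ (j+1)).eval (-1/2 - ((n:ℝ)+1))
      = -((n:ℝ)+3/2) * (ascPochhammer ℝ j).eval (-1/2 - (n:ℝ)) := by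
    rw [aP_succ_left_eval, show (-1/2 - ((n:ℝ)+1) + 1) = -1/2 - (n:ℝ) by ring]
    ring
  have hV : ((((j:ℝ)+1)-4*(n:ℝ)-6)*((((j:ℝ)+1))-4*(n:ℝ)-5)*((((j:ℝ)+1))-4*(n:ℝ)-4)
      *((((j:ℝ)+1))-4*(n:ℝ)-3)) ≠ 0 := by
    have e1 : ((j:ℝ)+1)-4*(n:ℝ)-6 < 0 := by linarith
    have e2 : ((j:ℝ)+1)-4*(n:ℝ)-5 < 0 := by linarith
    have e3 : ((j:ℝ)+1)-4*(n:ℝ)-4 < 0 := by linarith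
    have e4 : ((j:ℝ)+1)-4*(n:ℝ)-3 < 0 := by linarith
    exact mul_ne_zero (mul_ne_zero (mul_ne_zero e1.ne e2.ne) e3.ne) e4.ne
  have hD' : (ascPochhammer ℝ (j+1)).eval (-(4*((n:ℝ)+1)) - 2)
      = (ascPochhammer ℝ (j+1)).eval (-(4*(n:ℝ)) - 2)
          * ((-4*(n:ℝ)-6)*(-4*(n:ℝ)-5)*(-4*(n:ℝ)-4)*(-4*(n:ℝ)-3))
        / ((((j:ℝ)+1)-4*(n:ℝ)-6)*(((j:ℝ)+1)-4*(n:ℝ)-5)*(((j:ℝ)+1)-4*(n:ℝ)-4)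
            *(((j:ℝ)+1)-4*(n:ℝ)-3)) := by
    rw [eq_div_iff hV]
    have h4 := aP_shift4 (j+1) (-(4*(n:ℝ)) - 6)
    rw [show (-(4*(n:ℝ)) - 6 + 4) = -(4*(n:ℝ)) - 2 by ring] at h4
    rw [show (-(4*((n:ℝ)+1)) - 2) = -(4*(n:ℝ)) - 6 by ring]
    push_cast at h4 ⊢
    linear_combination -h4
  have hD2 : (ascPochhammer ℝ (j+2)).eval (-(4*(n:ℝ)) - 2)
      = (ascPochhammer ℝ (j+1)).eval (-(4*(n:ℝ)) - 2) * (((j:ℝ)+1) - 4*(n:ℝ) - 2) := by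
    rw [show j+2 = (j+1)+1 from rfl, ascPochhammer_succ_eval]
    push_cast; ring
  have hC2 : (ascPochhammer ℝ (j+2)).eval (1:ℝ)
      = (((j:ℝ)+1)+1) * (((j:ℝ)+1) * (ascPochhammer ℝ j).eval (1:ℝ)) := by
    rw [show j+2 = (j+1)+1 from rfl, ascPochhammer_succ_eval, hC]
    push_cast; ring
  have key := wz_algebra (n:ℝ) ((j:ℝ)+1)
      ((ascPochhammer ℝ j).eval (-(n:ℝ))) ((ascPochhammer ℝ j).eval (-1/2 - (n:ℝ)))
      ((ascPochhammer ℝ j).eval (1:ℝ)) ((ascPochhammer ℝ (j+1)).eval (-(4*(n:ℝ)) - 2))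
      (wzR n) ((8/9 : ℝ)^(j+1))
      hc hD hr (by positivity) (by positivity)
      (by positivity) (by positivity) (by positivity)
      (by positivity) (by positivity) (by positivity)
      (by intro h; linarith) (by intro h; linarith) (by intro h; linarith)
      (by intro h; linarith) (by intro h; linarith)
      (by intro h; linarith) (by intro h; linarith) (by intro h; linarith)
      (by intro h; linarith)
  unfold wzT wzG
  rw [wzR_succ n]
  push_cast
  rw [hA, hB, hC, hA', hB', hD', hD2, hC2]
  push_cast at key
  linear_combination key

lemma wzT_eval0 (m : ℕ) : wzT m 0 = 10*(m:ℝ) + 8 := by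
  simp [wzT]

set_option maxHeartbeats 1000000 in
lemma wz_step0 (n : ℕ) :
    wzT (n+1) 0 / wzR (n+1) - wzT n 0 / wzR n = wzG n 1 - wzG n 0 := by
  rw [wzT_eval0, wzT_eval0]
  show _ = (-9 * ((0:ℕ)+1 : ℝ) * wzP n ((0:ℕ)+1)
        * (ascPochhammer ℝ 0).eval (-(n : ℝ)) * (ascPochhammer ℝ 0).eval (-1/2 - (n : ℝ))
        * (8/9 : ℝ) ^ ((0:ℕ)+1)
      / (64 * (3*(n:ℝ)+4) * (3*(n:ℝ)+5) * (ascPochhammer ℝ ((0:ℕ)+1)).eval 1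
          * (ascPochhammer ℝ ((0:ℕ)+1)).eval (-(4*n : ℝ) - 2) * wzR n)) - 0
  rw [wzR_succ n]
  have hr : wzR n ≠ 0 := wzR_ne n
  have hN : (0:ℝ) ≤ (n:ℝ) := Nat.cast_nonneg n
  have e0 : (3*(n:ℝ)+3) ≠ 0 := by positivity
  have e1 : (3*(n:ℝ)+4) ≠ 0 := by positivity
  have e2 : (3*(n:ℝ)+5) ≠ 0 := by positivity
  have e3 : (2*(n:ℝ)+3/2) ≠ 0 := by positivity
  have e4 : (2*(n:ℝ)+5/2) ≠ 0 := by positivity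
  have e5 : ((n:ℝ)+1) ≠ 0 := by positivity
  have e6 : -(4*(n:ℝ)) - 2 ≠ 0 := by intro h; linarith
  have e7 : (-2 - (n:ℝ)*4) ≠ 0 := by intro h; linarith
  simp only [zero_add, ascPochhammer_zero, ascPochhammer_one, Polynomial.eval_one, Polynomial.eval_X]
  unfold wzP
  push_cast
  field_simp
  ring_nf
  field_simp
  ring

lemma wzG_zero (n : ℕ) : wzG n 0 = 0 := rfl

lemma wzG_top (n : ℕ) : wzG n (n+2) = 0 := by
  show (-9 * ((n+1:ℕ)+1 : ℝ) * wzP n ((n+1:ℕ)+1)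
        * (ascPochhammer ℝ (n+1)).eval (-(n : ℝ)) * (ascPochhammer ℝ (n+1)).eval (-1/2 - (n : ℝ))
        * (8/9 : ℝ) ^ ((n+1)+1)
      / (64 * (3*(n:ℝ)+4) * (3*(n:ℝ)+5) * (ascPochhammer ℝ ((n+1)+1)).eval 1
          * (ascPochhammer ℝ ((n+1)+1)).eval (-(4*n : ℝ) - 2) * wzR n)) = 0
  rw [ascPochhammer_eval_neg_coe_nat_of_lt (Nat.lt_succ_self n)]
  simp

lemma wzT_top (n : ℕ) : wzT n (n+1) = 0 := by
  unfold wzT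
  rw [ascPochhammer_eval_neg_coe_nat_of_lt (Nat.lt_succ_self n)]
  simp

lemma wz_main (n : ℕ) : ∑ k ∈ Finset.range (n+1), wzT n k = wzR n := by
  induction n with
  | zero =>
      rw [Finset.sum_range_one, wzT_eval0]
      unfold wzR wzZ
      norm_num [Nat.factorial]
  | succ n ih =>
      have hstep : ∀ k ∈ Finset.range (n+2),
          wzT (n+1) k / wzR (n+1) - wzT n k / wzR n = wzG n (k+1) - wzG n k := by
        intro k hk
        match k with
        | 0 => exact wz_step0 n
        | (j+1) =>
            have hj : j ≤ n := by
              have := Finset.mem_range.mp hk; omega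
            exact wz_step_succ n j hj
      have h2 : ∑ k ∈ Finset.range (n+2),
          (wzT (n+1) k / wzR (n+1) - wzT n k / wzR n) = 0 := by
        rw [Finset.sum_congr rfl hstep, Finset.sum_range_sub (wzG n), wzG_top, wzG_zero, sub_zero]
      rw [Finset.sum_sub_distrib, ← Finset.sum_div, ← Finset.sum_div] at h2
      have h1 : ∑ k ∈ Finset.range (n+2), wzT n k = wzR n := by
        rw [Finset.sum_range_succ, wzT_top, add_zero, ih]
      rw [h1, div_self (wzR_ne n), sub_eq_zero] at h2
      have := wzR_ne (n+1)
      field_simp at h2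
      exact h2

lemma gamma32 (m : ℕ) :
    Real.Gamma (3/2 + m) = (ascPochhammer ℝ m).eval (3/2:ℝ) * Real.Gamma (3/2) := by
  induction m with
  | zero => simp
  | succ m ih =>
      have h : (3/2 + ((m+1:ℕ)):ℝ) = (3/2 + m) + 1 := by push_cast; ring
      have hpos : (3/2 + (m:ℝ)) ≠ 0 := by positivity
      rw [h, Real.Gamma_add_one hpos, ih, ascPochhammer_succ_eval]
      ring

theorem strange_identity_72d (n : ℕ) :
    ∑ k ∈ Finset.range (n + 1),
      ((10 * n : ℝ) - k + 8) *
        ((ascPochhammer ℝ k).eval (-(n : ℝ)) * (ascPochhammer ℝ k).eval (-1 / 2 - (n : ℝ))) /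
        ((ascPochhammer ℝ k).eval 1 * (ascPochhammer ℝ k).eval (-(4 * n : ℝ) - 2)) *
        (8 / 9 : ℝ) ^ k
      = 2 * Real.Gamma (1 / 2) * Real.Gamma (3 * (n : ℝ) + 3) /
          (9 ^ n * Real.Gamma (2 * (n : ℝ) + 3 / 2) * Real.Gamma ((n : ℝ) + 1)) := by
  have hL : ∑ k ∈ Finset.range (n + 1),
      ((10 * n : ℝ) - k + 8) *
        ((ascPochhammer ℝ k).eval (-(n : ℝ)) * (ascPochhammer ℝ k).eval (-1 / 2 - (n : ℝ))) /
        ((ascPochhammer ℝ k).eval 1 * (ascPochhammer ℝ k).eval (-(4 * n : ℝ) - 2)) *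
        (8 / 9 : ℝ) ^ k = ∑ k ∈ Finset.range (n+1), wzT n k := rfl
  rw [hL, wz_main]
  have hg3 : Real.Gamma (3 * (n : ℝ) + 3) = (Nat.factorial (3*n+2) : ℝ) := by
    rw [show (3 * (n:ℝ) + 3) = ((3*n+2 : ℕ):ℝ) + 1 by push_cast; ring,
      Real.Gamma_nat_eq_factorial]
  have hg1 : Real.Gamma ((n : ℝ) + 1) = (Nat.factorial n : ℝ) := Real.Gamma_nat_eq_factorial n
  have hg2 : Real.Gamma (2 * (n : ℝ) + 3/2) = wzZ n * Real.Gamma (3/2) := by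
    rw [show (2 * (n:ℝ) + 3/2) = 3/2 + ((2*n : ℕ):ℝ) by push_cast; ring, gamma32]
    rfl
  have hg32 : Real.Gamma (3/2 : ℝ) = 1/2 * Real.Gamma (1/2) := by
    rw [show (3/2 : ℝ) = 1/2 + 1 by norm_num, Real.Gamma_add_one (by norm_num)]
  have hGpos : 0 < Real.Gamma (1/2 : ℝ) := Real.Gamma_pos_of_pos (by norm_num)
  rw [hg3, hg1, hg2, hg32]
  unfold wzR
  have h9 : (9:ℝ)^n ≠ 0 := by positivity
  have hz : wzZ n ≠ 0 := (wzZ_pos n).ne'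
  have hf : (Nat.factorial n : ℝ) ≠ 0 := by exact_mod_cast (Nat.factorial_pos n).ne'
  field_simp
  ring
end
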